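/- Fix s ≥ 1 and n ≥ 1. The uncrowding map Ψ, which sends a one-row tableau T ∈ SVT^n((s)) with boxes A_1, …, A_s (left to right) to the tableau of hook shape (s, 1^{excess(T)}) whose first row is (min A_1, …, min A_s) and whose first column below the corner lists, in increasing order, all remaining (non-minimal) entries of A_1, A_2, …, A_s, is a bijection from SVT^n((s)) onto the disjoint union over e ≥ 0 of SSYT^n((s, 1^e)); moreover Ψ preserves weights and commutes with all crystal operators e_i and f_i (1 ≤ i < n). -/

import Mathlib

open scoped Classical

noncomputable section

namespace SVTCrystal

/-- A filling assigns to each (row, column) position (0-indexed) a finite set of entries. -/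
abbrev Filling : Type := ℕ → ℕ → Finset ℕ

/-- `lam` is a partition shape with at most `n` rows. -/
def IsPartitionShape (n : ℕ) (lam : ℕ → ℕ) : Prop :=
  (∀ r, lam (r + 1) ≤ lam r) ∧ (∀ r, n ≤ r → lam r = 0)

/-- Semistandard set-valued tableau of shape `lam` with entries in `{1,…,n}`. -/
structure IsSVT (n : ℕ) (lam : ℕ → ℕ) (t : Filling) : Prop where
  boxNonempty : ∀ r c, c < lam r → (t r c).Nonempty
  emptyOutside : ∀ r c, ¬ c < lam r → t r c = ∅
  entryBounds : ∀ r c a, a ∈ t r c → 1 ≤ a ∧ a ≤ n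
  rowWeak : ∀ r c a b, a ∈ t r c → b ∈ t r (c + 1) → a ≤ b
  colStrict : ∀ r c a b, a ∈ t r c → b ∈ t (r + 1) c → a < b

/-- Semistandard Young tableau: a set-valued tableau all of whose boxes are singletons. -/
def IsSSYT (n : ℕ) (lam : ℕ → ℕ) (t : Filling) : Prop :=
  IsSVT n lam t ∧ ∀ r c, c < lam r → (t r c).card = 1

/-- The weight: `wt n lam t j` is the number of boxes of `t` containing the entry `j`. -/
def wt (n : ℕ) (lam : ℕ → ℕ) (t : Filling) (j : ℕ) : ℕ :=
  ((Finset.range n ×ˢ Finset.range (lam 0)).filter (fun p => j ∈ t p.1 p.2)).card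

/-- The excess: total number of extra entries. -/
def excess (n : ℕ) (lam : ℕ → ℕ) (t : Filling) : ℕ :=
  ∑ p ∈ Finset.range n ×ˢ Finset.range (lam 0), ((t p.1 p.2).card - 1)

/-- Column `c` contains the entry `a`. -/
def colHas (n : ℕ) (t : Filling) (a c : ℕ) : Prop := ∃ r, r < n ∧ a ∈ t r c

/-- The sign of column `c` for the `i`-signature rule: `+` (true) if the column contains `i`
but not `i+1`, `-` (false) if it contains `i+1` but not `i`. -/
def colSign (n : ℕ) (t : Filling) (i c : ℕ) : Option Bool :=
  if colHas n t i c ∧ ¬ colHas n t (i + 1) c then some true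
  else if colHas n t (i + 1) c ∧ ¬ colHas n t i c then some false
  else none

/-- The number of `-` (false) signs left uncanceled after scanning the word left-to-right,
iteratively canceling `-+` pairs. -/
def mctr (w : List Bool) : ℕ := w.foldl (fun cnt b => if b then cnt - 1 else cnt + 1) 0

/-- The number of `+` (true) signs left uncanceled, scanning right-to-left. -/
def pctr (w : List Bool) : ℕ := w.foldr (fun b cnt => if b then cnt + 1 else cnt - 1) 0

/-- The word of column signs of the columns before column `c`. -/
def colWordBefore (n : ℕ) (t : Filling) (i c : ℕ) : List Bool :=
  (List.range c).filterMap (colSign n t i)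

/-- The word of column signs of the columns after column `c` (among columns `< ncols`). -/
def colWordAfter (n ncols : ℕ) (t : Filling) (i c : ℕ) : List Bool :=
  ((List.range ncols).drop (c + 1)).filterMap (colSign n t i)

/-- Column `c` carries an uncanceled `+` for the `i`-signature rule. -/
def PlusCol (n ncols : ℕ) (t : Filling) (i c : ℕ) : Prop :=
  c < ncols ∧ colSign n t i c = some true ∧ mctr (colWordBefore n t i c) = 0

/-- Column `c` carries an uncanceled `-` for the `i`-signature rule. -/
def MinusCol (n ncols : ℕ) (t : Filling) (i c : ℕ) : Prop :=
  c < ncols ∧ colSign n t i c = some false ∧ pctr (colWordAfter n ncols t i c) = 0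

/-- Column `c` is the rightmost uncanceled `+`. -/
def fBoxCol (n ncols : ℕ) (t : Filling) (i c : ℕ) : Prop :=
  PlusCol n ncols t i c ∧ ∀ c', PlusCol n ncols t i c' → c' ≤ c

/-- Column `c` is the leftmost uncanceled `-`. -/
def eBoxCol (n ncols : ℕ) (t : Filling) (i c : ℕ) : Prop :=
  MinusCol n ncols t i c ∧ ∀ c', MinusCol n ncols t i c' → c ≤ c'

/-- Replace the content of the box in row `r`, column `c` by `A`. -/
def updateBox (t : Filling) (r c : ℕ) (A : Finset ℕ) : Filling :=
  fun r' c' => if r' = r ∧ c' = c then A else t r' c'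

/-- The set-valued crystal operator `f_i` (signature rule). -/
def fRaw (n : ℕ) (lam : ℕ → ℕ) (i : ℕ) (t : Filling) : Option Filling :=
  if h : ∃ c, fBoxCol n (lam 0) t i c then
    let c := Classical.choose h
    if hr : ∃ r, r < n ∧ i ∈ t r c then
      let r := Classical.choose hr
      if i ∈ t r (c + 1) then
        some (updateBox (updateBox t r (c + 1) ((t r (c + 1)).erase i)) r c
          (insert (i + 1) (t r c)))
      else some (updateBox t r c (insert (i + 1) ((t r c).erase i)))
    else none
  else none

/-- The set-valued crystal operator `e_i` (signature rule). -/
def eRaw (n : ℕ) (lam : ℕ → ℕ) (i : ℕ) (t : Filling) : Option Filling :=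
  if h : ∃ c, eBoxCol n (lam 0) t i c then
    let c := Classical.choose h
    if hr : ∃ r, r < n ∧ (i + 1) ∈ t r c then
      let r := Classical.choose hr
      if 0 < c ∧ (i + 1) ∈ t r (c - 1) then
        some (updateBox (updateBox t r (c - 1) ((t r (c - 1)).erase (i + 1))) r c
          (insert i (t r c)))
      else some (updateBox t r c (insert i ((t r c).erase (i + 1))))
    else none
  else none

/-- Iterate a partially-defined operator. -/
def iterOpt (g : Filling → Option Filling) : ℕ → Filling → Option Filling
  | 0, t => some t
  | m + 1, t => (iterOpt g m t).bind g

/-- Highest weight (Yamanouchi) elements. -/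
def IsYamanouchi (n : ℕ) (lam : ℕ → ℕ) (t : Filling) : Prop :=
  ∀ i, 1 ≤ i → i < n → eRaw n lam i t = none

/-- Closure of `t0` under the crystal operators `e_i`, `f_i` for `1 ≤ i < n`. -/
inductive Reach (n : ℕ) (lam : ℕ → ℕ) (t0 : Filling) : Filling → Prop
  | base : Reach n lam t0 t0
  | stepF : ∀ {t t' : Filling} (i : ℕ), 1 ≤ i → i < n → Reach n lam t0 t →
      fRaw n lam i t = some t' → Reach n lam t0 t'
  | stepE : ∀ {t t' : Filling} (i : ℕ), 1 ≤ i → i < n → Reach n lam t0 t →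
      eRaw n lam i t = some t' → Reach n lam t0 t'

/-- The one-row partition `(s)`. -/
def rowShape (s : ℕ) : ℕ → ℕ := fun r => if r = 0 then s else 0

/-- The one-column partition `(1^k)`. -/
def colShape (k : ℕ) : ℕ → ℕ := fun r => if r < k then 1 else 0

/-- The hook partition `(s, 1^e)`. -/
def hookShape (s e : ℕ) : ℕ → ℕ := fun r => if r = 0 then s else if r ≤ e then 1 else 0

/-! ### K-theory crystal operators (for single rows and single columns) -/

/-- Some box of the tableau contains the entry `a`. -/
def containsEntry (n : ℕ) (lam : ℕ → ℕ) (t : Filling) (a : ℕ) : Prop :=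
  ∃ r c, r < n ∧ c < lam r ∧ a ∈ t r c

/-- `p` is the rightmost box of `t` containing `i`. -/
def KBoxF (n : ℕ) (lam : ℕ → ℕ) (t : Filling) (i : ℕ) (p : ℕ × ℕ) : Prop :=
  p.1 < n ∧ p.2 < lam p.1 ∧ i ∈ t p.1 p.2 ∧
    ∀ q : ℕ × ℕ, q.1 < n → q.2 < lam q.1 → i ∈ t q.1 q.2 → q.2 ≤ p.2

/-- The K-crystal operator `f_i^K`: if `i` occurs in `t` and `i+1` does not, add `i+1` to
the rightmost box containing `i`; otherwise `0`. -/
def fK (n : ℕ) (lam : ℕ → ℕ) (i : ℕ) (t : Filling) : Option Filling :=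
  if h : (∃ p : ℕ × ℕ, KBoxF n lam t i p) ∧ ¬ containsEntry n lam t (i + 1) then
    let p := Classical.choose h.1
    some (updateBox t p.1 p.2 (insert (i + 1) (t p.1 p.2)))
  else none

/-- The K-crystal operator `e_i^K`: delete `i+1` from the box containing both `i` and `i+1`,
if such a box exists; otherwise `0`. -/
def eK (n : ℕ) (lam : ℕ → ℕ) (i : ℕ) (t : Filling) : Option Filling :=
  if h : ∃ p : ℕ × ℕ, p.1 < n ∧ p.2 < lam p.1 ∧ i ∈ t p.1 p.2 ∧ (i + 1) ∈ t p.1 p.2 then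
    let p := Classical.choose h
    some (updateBox t p.1 p.2 ((t p.1 p.2).erase (i + 1)))
  else none

/-- `t'` is the result of applying `g` to `t` as many times as possible. -/
def MaxApply (g : Filling → Option Filling) (t t' : Filling) : Prop :=
  (∃ m, iterOpt g m t = some t') ∧ g t' = none

/-- One Demazure step: apply `e_i` as many times as possible, then `e_i^K` as many times
as possible (here `eKop i` is the `i`-th K-operator). -/
def DemStep (n : ℕ) (lam : ℕ → ℕ) (eKop : ℕ → Filling → Option Filling) (i : ℕ)
    (t t' : Filling) : Prop :=
  ∃ t1, MaxApply (eRaw n lam i) t t1 ∧ MaxApply (eKop i) t1 t'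

/-- `DemReach n lam eKop [i₁,…,iℓ] t u` holds when
`u = (e_{iℓ}^K)^max e_{iℓ}^max ⋯ (e_{i₁}^K)^max e_{i₁}^max t`. -/
def DemReach (n : ℕ) (lam : ℕ → ℕ) (eKop : ℕ → Filling → Option Filling) :
    List ℕ → Filling → Filling → Prop
  | [], t, u => t = u
  | i :: rest, t, u => ∃ t2, DemStep n lam eKop i t t2 ∧ DemReach n lam eKop rest t2 u

/-- The minimal highest weight tableau `u_λ`, whose row `r` boxes are all `{r+1}`. -/
def uTab (lam : ℕ → ℕ) : Filling := fun r c => if c < lam r then {r + 1} else ∅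

/-- The K-Demazure crystal associated with a word `[i₁,…,iℓ]`. -/
def KDem (n : ℕ) (lam : ℕ → ℕ) (eKop : ℕ → Filling → Option Filling) (word : List ℕ) :
    Set Filling :=
  {t | IsSVT n lam t ∧ DemReach n lam eKop word t (uTab lam)}

/-! ### Permutations and reduced words -/

/-- The permutation `s_{i₁} ⋯ s_{iℓ}` of a word `[i₁,…,iℓ]`, where `s_i` swaps `i`, `i+1`. -/
def wordPerm (word : List ℕ) : Equiv.Perm ℕ :=
  (word.map fun i => Equiv.swap i (i + 1)).prod

/-- `word` is a reduced word for `w` in the Coxeter generators `s_1, …, s_{n-1}`. -/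
def IsReducedWord (n : ℕ) (w : Equiv.Perm ℕ) (word : List ℕ) : Prop :=
  (∀ i ∈ word, 1 ≤ i ∧ i < n) ∧ wordPerm word = w ∧
    ∀ word' : List ℕ, (∀ i ∈ word', 1 ≤ i ∧ i < n) → wordPerm word' = w →
      word.length ≤ word'.length

/-- The Coxeter length of a permutation of `{1,…,n}`. -/
def permLength (n : ℕ) (σ : Equiv.Perm ℕ) : ℕ :=
  sInf {l | ∃ word : List ℕ, (∀ i ∈ word, 1 ≤ i ∧ i < n) ∧ wordPerm word = σ ∧
    word.length = l}

/-- The parabolic subgroup generated by `s_2, …, s_{n-1}`. -/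
def parabolic (n : ℕ) : Subgroup (Equiv.Perm ℕ) :=
  Subgroup.closure {σ | ∃ i, 2 ≤ i ∧ i < n ∧ σ = Equiv.swap i (i + 1)}

/-! ### Polynomials -/

/-- Polynomials in `x₁, x₂, …` over `ℤ[β]`; the variable `β` is `Polynomial.X`. -/
abbrev KPoly : Type := MvPolynomial ℕ (Polynomial ℤ)

/-- The scalar `β`. -/
def betaP : KPoly := MvPolynomial.C Polynomial.X

/-- The monomial `x^{wt(T)} = x₁^{wt₁} ⋯ xₙ^{wtₙ}`. -/
def xwt (n : ℕ) (lam : ℕ → ℕ) (t : Filling) : KPoly :=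
  ∏ j ∈ Finset.Icc 1 n, (MvPolynomial.X j : KPoly) ^ wt n lam t j

/-- The β-character `∑_{T ∈ S} β^{excess T} x^{wt T}` of a set of tableaux. -/
def charSet (n : ℕ) (lam : ℕ → ℕ) (S : Set Filling) : KPoly :=
  ∑ᶠ t ∈ S, betaP ^ excess n lam t * xwt n lam t

/-- The symmetric Grothendieck polynomial `𝔊_λ(x₁,…,xₙ; β)`. -/
def Groth (n : ℕ) (lam : ℕ → ℕ) : KPoly :=
  charSet n lam {t | IsSVT n lam t}

/-- The Schur polynomial `s_μ(x₁,…,xₙ)`. -/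
def SchurP (n : ℕ) (mu : ℕ → ℕ) : KPoly :=
  ∑ᶠ t ∈ {t : Filling | IsSSYT n mu t}, xwt n mu t

/-- The numerator defining the Demazure–Lascoux operator `ϖ_i`. -/
def DLnum (i : ℕ) (f : KPoly) : KPoly :=
  (MvPolynomial.X i + betaP * MvPolynomial.X i * MvPolynomial.X (i + 1)) * f -
    (MvPolynomial.X (i + 1) + betaP * MvPolynomial.X i * MvPolynomial.X (i + 1)) *
      (MvPolynomial.rename (Equiv.swap i (i + 1)) f)

/-- `DL` implements the Demazure–Lascoux operators `ϖ_i` for `1 ≤ i < n`: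
`(x_i - x_{i+1}) · ϖ_i f` equals the defining numerator. -/
def IsDLOp (n : ℕ) (DL : ℕ → KPoly → KPoly) : Prop :=
  ∀ i, 1 ≤ i → i < n → ∀ f : KPoly,
    (MvPolynomial.X i - MvPolynomial.X (i + 1)) * DL i f = DLnum i f

/-- `applyDL DL [i₁,…,iℓ] f = ϖ_{i₁} ϖ_{i₂} ⋯ ϖ_{iℓ} f`. -/
def applyDL (DL : ℕ → KPoly → KPoly) : List ℕ → KPoly → KPoly
  | [], f => f
  | i :: rest, f => DL i (applyDL DL rest f)

/-- The minimum of a finite set of naturals (`0` for the empty set). -/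
def minE (A : Finset ℕ) : ℕ := sInf (A : Set ℕ)

/-- The non-minimal entries of the boxes of a one-row tableau, in increasing order. -/
def uncrowdRest (s : ℕ) (t : Filling) : List ℕ :=
  Finset.sort ((Finset.range s).biUnion fun c => (t 0 c).erase (minE (t 0 c))) (· ≤ ·)

/-- The uncrowding map `Ψ` on one-row set-valued tableaux: the first row records the minima
of the boxes, and the first column below the corner lists the remaining entries in
increasing order. -/
def Psi (s : ℕ) (t : Filling) : Filling := fun r c =>
  if r = 0 ∧ c < s then {minE (t 0 c)}
  else if c = 0 ∧ 1 ≤ r ∧ r ≤ (uncrowdRest s t).length then {(uncrowdRest s t).getD (r - 1) 0}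
  else ∅

/-! ### Auxiliary lemmas -/

section AuxBasic

lemma minE_mem {A : Finset ℕ} (h : A.Nonempty) : minE A ∈ A := by
  obtain ⟨x, hx⟩ := h
  exact Nat.sInf_mem (s := (↑A : Set ℕ)) ⟨x, hx⟩

lemma minE_le {A : Finset ℕ} {x : ℕ} (h : x ∈ A) : minE A ≤ x := Nat.sInf_le h

lemma minE_eq {A : Finset ℕ} {x : ℕ} (hx : x ∈ A) (h : ∀ y ∈ A, x ≤ y) : minE A = x :=
  le_antisymm (minE_le hx) (h _ (minE_mem ⟨x, hx⟩))

lemma mctr_of_no_false {w : List Bool} (h : ∀ b ∈ w, b = true) : mctr w = 0 := by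
  induction w with
  | nil => rfl
  | cons b v ih =>
    have hb : b = true := h b (by simp)
    subst hb
    show List.foldl (fun cnt b => if b then cnt - 1 else cnt + 1) 0 (true :: v) = 0
    simpa [mctr] using ih fun b hb => h b (by simp [hb])

lemma mctr_cancel (v : List Bool) : mctr (false :: true :: v) = mctr v := by
  simp [mctr]

lemma mctr_singleton_false : mctr [false] = 1 := by simp [mctr]

lemma pctr_cons_true (v : List Bool) : pctr (true :: v) = pctr v + 1 := rfl

lemma pctr_cons_false (v : List Bool) : pctr (false :: v) = pctr v - 1 := rfl

lemma pctr_of_no_true {w : List Bool} (h : ∀ b ∈ w, b = false) : pctr w = 0 := by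
  induction w with
  | nil => rfl
  | cons b v ih =>
    have hb : b = false := h b (by simp)
    subst hb
    rw [pctr_cons_false, ih fun b hb => h b (by simp [hb])]

lemma drop_range_eq (m n : ℕ) : (List.range n).drop m = (List.range (n - m)).map (m + ·) := by
  apply List.ext_getElem
  · simp
  · intro k h1 h2
    simp only [List.getElem_drop, List.getElem_range, List.getElem_map]

lemma filterMap_range_none {f : ℕ → Option Bool} {d : ℕ} (h : ∀ j < d, f j = none) :
    (List.range d).filterMap f = [] :=
  List.filterMap_eq_nil_iff.mpr (fun a ha => h a (List.mem_range.mp ha))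

lemma filterMap_all_true {f : ℕ → Option Bool} : ∀ {l : List ℕ}, (∀ j ∈ l, f j = some true) →
    l.filterMap f = List.replicate l.length true := by
  intro l
  induction l with
  | nil => intro _; rfl
  | cons a l ih =>
    intro h
    rw [List.filterMap_cons, h a (by simp)]
    simp only [List.length_cons, List.replicate_succ]
    rw [ih fun j hj => h j (by simp [hj])]

lemma mctr_replicate_true (k : ℕ) : mctr (List.replicate k true) = 0 :=
  mctr_of_no_false (by intro b hb; exact (List.eq_of_mem_replicate hb))

lemma mctr_before_zero {f : ℕ → Option Bool} {d : ℕ}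
    (h : ∀ j < d, f j ≠ some false) : mctr ((List.range d).filterMap f) = 0 := by
  apply mctr_of_no_false
  intro b hb
  rcases List.mem_filterMap.mp hb with ⟨j, hj, hfj⟩
  cases b
  · exact absurd hfj (h j (List.mem_range.mp hj))
  · rfl

lemma filterMap_range_single {f : ℕ → Option Bool} {d a : ℕ} {b : Bool} (had : a < d)
    (h0 : f a = some b) (h1 : ∀ j < d, j ≠ a → f j = none) :
    (List.range d).filterMap f = [b] := by
  have hd : d = (a + 1) + (d - (a+1)) := by omega
  rw [hd, List.range_add, List.filterMap_append]
  have e1 : (List.range (a+1)).filterMap f = [b] := by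
    rw [List.range_succ, List.filterMap_append]
    rw [filterMap_range_none (fun j hj => h1 j (by omega) (by omega))]
    simp [h0]
  have e2 : (List.filterMap f ((List.range (d - (a+1))).map ((a+1) + ·))) = [] := by
    apply List.filterMap_eq_nil_iff.mpr
    intro x hx
    rcases List.mem_map.mp hx with ⟨j, hj, rfl⟩
    have hj' := List.mem_range.mp hj
    exact h1 _ (by omega) (by omega)
  rw [e1, e2]
  simp

lemma mctr_word_struct {f : ℕ → Option Bool} {a d : ℕ} (ha0 : 0 < a) (had : a < d)
    (h0 : f 0 = some false) (h1 : ∀ j, 0 < j → j < a → f j = none)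
    (h2 : ∀ j, a ≤ j → j < d → f j = some true) :
    mctr ((List.range d).filterMap f) = 0 := by
  have hd : d = a + (d - a) := by omega
  rw [hd, List.range_add, List.filterMap_append]
  have e1 : (List.range a).filterMap f = [false] :=
    filterMap_range_single ha0 h0 (fun j hj hj0 => h1 j (by omega) hj)
  have e2 : (List.filterMap f ((List.range (d - a)).map (a + ·))) = List.replicate (d - a) true := by
    have : ∀ j ∈ (List.range (d - a)).map (a + ·), f j = some true := by
      intro j hj
      rcases List.mem_map.mp hj with ⟨j', hj', rfl⟩
      have := List.mem_range.mp hj'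
      exact h2 _ (by omega) (by omega)
    rw [filterMap_all_true this]
    simp
  rw [e1, e2]
  have hpos : 0 < d - a := by omega
  obtain ⟨k, hk⟩ : ∃ k, d - a = k + 1 := ⟨d - a - 1, by omega⟩
  rw [hk, List.replicate_succ]
  show mctr (false :: true :: List.replicate k true) = 0
  rw [mctr_cancel]
  exact mctr_replicate_true k

lemma pctr_after_zero {f : ℕ → Option Bool} {ncols c : ℕ}
    (h : ∀ j, c < j → j < ncols → f j ≠ some true) :
    pctr (((List.range ncols).drop (c + 1)).filterMap f) = 0 := by
  apply pctr_of_no_true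
  intro b hb
  rcases List.mem_filterMap.mp hb with ⟨j, hj, hfj⟩
  rw [drop_range_eq] at hj
  rcases List.mem_map.mp hj with ⟨j', hj', rfl⟩
  have hj'' := List.mem_range.mp hj'
  cases b
  · rfl
  · exact absurd hfj (h _ (by omega) (by omega))

lemma pctr_after_ne {f : ℕ → Option Bool} {ncols c k : ℕ} (hck : c < k) (hk : k < ncols)
    (hnone : ∀ j, c < j → j < k → f j = none) (hks : f k = some true) :
    pctr (((List.range ncols).drop (c + 1)).filterMap f) ≠ 0 := by
  rw [drop_range_eq]
  have hsplit : ncols - (c+1) = (k - c - 1 + 1) + (ncols - (c+1) - (k - c - 1 + 1)) := by omega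
  rw [hsplit, List.range_add, List.map_append, List.filterMap_append]
  have e1 : List.filterMap f (((List.range (k - c - 1 + 1)).map ((c+1) + ·))) = [true] := by
    rw [List.filterMap_map]
    apply filterMap_range_single (a := k - c - 1) (by omega)
    · show f (c + 1 + (k - c - 1)) = some true
      rw [show c + 1 + (k - c - 1) = k by omega]; exact hks
    · intro j hj hja
      show f (c + 1 + j) = none
      exact hnone _ (by omega) (by omega)
  rw [e1]
  show pctr (true :: _) ≠ 0
  rw [pctr_cons_true]
  omega

end AuxBasic
section OpChar

variable {n : ℕ} {lam : ℕ → ℕ} {u : Filling} {i : ℕ}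

lemma colSign_true_iff {c : ℕ} :
    colSign n u i c = some true ↔ colHas n u i c ∧ ¬ colHas n u (i + 1) c := by
  unfold colSign
  split_ifs with h1 h2 <;> simp_all

lemma colSign_false_iff {c : ℕ} :
    colSign n u i c = some false ↔ colHas n u (i + 1) c ∧ ¬ colHas n u i c := by
  unfold colSign
  split_ifs with h1 h2 <;> simp_all

lemma fBoxCol_unique {ncols c c' : ℕ} (h : fBoxCol n ncols u i c)
    (h' : fBoxCol n ncols u i c') : c = c' :=
  le_antisymm (h'.2 _ h.1) (h.2 _ h'.1)

lemma eBoxCol_unique {ncols c c' : ℕ} (h : eBoxCol n ncols u i c)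
    (h' : eBoxCol n ncols u i c') : c = c' :=
  le_antisymm (h.2 _ h'.1) (h'.2 _ h.1)

lemma exists_fBoxCol {ncols : ℕ} (h : ∃ c, PlusCol n ncols u i c) :
    ∃ c, fBoxCol n ncols u i c := by
  obtain ⟨c, hc⟩ := h
  refine ⟨Nat.findGreatest (PlusCol n ncols u i) ncols,
    Nat.findGreatest_spec (le_of_lt hc.1) hc, ?_⟩
  intro c' hc'
  exact Nat.le_findGreatest (le_of_lt hc'.1) hc'

lemma exists_eBoxCol {ncols : ℕ} (h : ∃ c, MinusCol n ncols u i c) :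
    ∃ c, eBoxCol n ncols u i c :=
  ⟨Nat.find h, Nat.find_spec h, fun c' hc' => Nat.find_min' h hc'⟩

lemma PlusCol.colHas {ncols c : ℕ} (h : PlusCol n ncols u i c) : colHas n u i c :=
  (colSign_true_iff.mp h.2.1).1

lemma MinusCol.colHas {ncols c : ℕ} (h : MinusCol n ncols u i c) : colHas n u (i + 1) c :=
  (colSign_false_iff.mp h.2.1).1

lemma fRaw_eq_none_iff :
    fRaw n lam i u = none ↔ ∀ c, ¬ PlusCol n (lam 0) u i c := by
  unfold fRaw
  by_cases h : ∃ c, fBoxCol n (lam 0) u i c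
  · rw [dif_pos h]
    obtain ⟨r, hr, hmem⟩ := (Classical.choose_spec h).1.colHas
    have hrex : ∃ r, r < n ∧ i ∈ u r (Classical.choose h) := ⟨r, hr, hmem⟩
    simp only []
    rw [dif_pos hrex]
    constructor
    · intro hcon
      split at hcon <;> simp_all
    · intro hall
      exact absurd (Classical.choose_spec h).1 (hall _)
  · rw [dif_neg h]
    simp only [true_iff]
    intro c hc
    exact h (exists_fBoxCol ⟨c, hc⟩)

lemma eRaw_eq_none_iff :
    eRaw n lam i u = none ↔ ∀ c, ¬ MinusCol n (lam 0) u i c := by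
  unfold eRaw
  by_cases h : ∃ c, eBoxCol n (lam 0) u i c
  · rw [dif_pos h]
    obtain ⟨r, hr, hmem⟩ := (Classical.choose_spec h).1.colHas
    have hrex : ∃ r, r < n ∧ (i + 1) ∈ u r (Classical.choose h) := ⟨r, hr, hmem⟩
    simp only []
    rw [dif_pos hrex]
    constructor
    · intro hcon
      split at hcon <;> simp_all
    · intro hall
      exact absurd (Classical.choose_spec h).1 (hall _)
  · rw [dif_neg h]
    simp only [true_iff]
    intro c hc
    exact h (exists_eBoxCol ⟨c, hc⟩)

lemma fRaw_eq_some_single {c₀ r₀ : ℕ}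
    (hfb : fBoxCol n (lam 0) u i c₀) (hr0 : r₀ < n) (hmem : i ∈ u r₀ c₀)
    (huniq : ∀ r, r < n → i ∈ u r c₀ → r = r₀) (hnr : i ∉ u r₀ (c₀ + 1)) :
    fRaw n lam i u = some (updateBox u r₀ c₀ (insert (i + 1) ((u r₀ c₀).erase i))) := by
  have hex : ∃ c, fBoxCol n (lam 0) u i c := ⟨c₀, hfb⟩
  have hcc : Classical.choose hex = c₀ := fBoxCol_unique (Classical.choose_spec hex) hfb
  have hrex : ∃ r, r < n ∧ i ∈ u r c₀ := ⟨r₀, hr0, hmem⟩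
  have hrr : Classical.choose hrex = r₀ :=
    huniq _ (Classical.choose_spec hrex).1 (Classical.choose_spec hrex).2
  unfold fRaw
  rw [dif_pos hex]
  simp only [hcc]
  rw [dif_pos hrex]
  simp only [hrr]
  rw [if_neg hnr]

lemma fRaw_eq_some_double {c₀ r₀ : ℕ}
    (hfb : fBoxCol n (lam 0) u i c₀) (hr0 : r₀ < n) (hmem : i ∈ u r₀ c₀)
    (huniq : ∀ r, r < n → i ∈ u r c₀ → r = r₀) (hnr : i ∈ u r₀ (c₀ + 1)) :
    fRaw n lam i u = some (updateBox (updateBox u r₀ (c₀ + 1) ((u r₀ (c₀ + 1)).erase i)) r₀ c₀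
      (insert (i + 1) (u r₀ c₀))) := by
  have hex : ∃ c, fBoxCol n (lam 0) u i c := ⟨c₀, hfb⟩
  have hcc : Classical.choose hex = c₀ := fBoxCol_unique (Classical.choose_spec hex) hfb
  have hrex : ∃ r, r < n ∧ i ∈ u r c₀ := ⟨r₀, hr0, hmem⟩
  have hrr : Classical.choose hrex = r₀ :=
    huniq _ (Classical.choose_spec hrex).1 (Classical.choose_spec hrex).2
  unfold fRaw
  rw [dif_pos hex]
  simp only [hcc]
  rw [dif_pos hrex]
  simp only [hrr]
  rw [if_pos hnr]

lemma eRaw_eq_some_single {c₀ r₀ : ℕ}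
    (heb : eBoxCol n (lam 0) u i c₀) (hr0 : r₀ < n) (hmem : (i + 1) ∈ u r₀ c₀)
    (huniq : ∀ r, r < n → (i + 1) ∈ u r c₀ → r = r₀)
    (hnl : ¬ (0 < c₀ ∧ (i + 1) ∈ u r₀ (c₀ - 1))) :
    eRaw n lam i u = some (updateBox u r₀ c₀ (insert i ((u r₀ c₀).erase (i + 1)))) := by
  have hex : ∃ c, eBoxCol n (lam 0) u i c := ⟨c₀, heb⟩
  have hcc : Classical.choose hex = c₀ := eBoxCol_unique (Classical.choose_spec hex) heb
  have hrex : ∃ r, r < n ∧ (i + 1) ∈ u r c₀ := ⟨r₀, hr0, hmem⟩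
  have hrr : Classical.choose hrex = r₀ :=
    huniq _ (Classical.choose_spec hrex).1 (Classical.choose_spec hrex).2
  unfold eRaw
  rw [dif_pos hex]
  simp only [hcc]
  rw [dif_pos hrex]
  simp only [hrr]
  rw [if_neg hnl]

lemma eRaw_eq_some_double {c₀ r₀ : ℕ}
    (heb : eBoxCol n (lam 0) u i c₀) (hr0 : r₀ < n) (hmem : (i + 1) ∈ u r₀ c₀)
    (huniq : ∀ r, r < n → (i + 1) ∈ u r c₀ → r = r₀)
    (hl : 0 < c₀ ∧ (i + 1) ∈ u r₀ (c₀ - 1)) :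
    eRaw n lam i u = some (updateBox (updateBox u r₀ (c₀ - 1) ((u r₀ (c₀ - 1)).erase (i + 1)))
      r₀ c₀ (insert i (u r₀ c₀))) := by
  have hex : ∃ c, eBoxCol n (lam 0) u i c := ⟨c₀, heb⟩
  have hcc : Classical.choose hex = c₀ := eBoxCol_unique (Classical.choose_spec hex) heb
  have hrex : ∃ r, r < n ∧ (i + 1) ∈ u r c₀ := ⟨r₀, hr0, hmem⟩
  have hrr : Classical.choose hrex = r₀ :=
    huniq _ (Classical.choose_spec hrex).1 (Classical.choose_spec hrex).2
  unfold eRaw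
  rw [dif_pos hex]
  simp only [hcc]
  rw [dif_pos hrex]
  simp only [hrr]
  rw [if_pos hl]

end OpChar
/-- The finset of non-minimal entries of a one-row filling. -/
def Eset (s : ℕ) (t : Filling) : Finset ℕ :=
  (Finset.range s).biUnion fun c => (t 0 c).erase (minE (t 0 c))

lemma uncrowdRest_def (s : ℕ) (t : Filling) :
    uncrowdRest s t = (Eset s t).sort (· ≤ ·) := rfl

lemma mem_Eset {s : ℕ} {t : Filling} {x : ℕ} :
    x ∈ Eset s t ↔ ∃ c, c < s ∧ x ∈ t 0 c ∧ x ≠ minE (t 0 c) := by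
  simp only [Eset, Finset.mem_biUnion, Finset.mem_range, Finset.mem_erase]
  tauto

section RowLems

variable {n s : ℕ} {t : Filling}

lemma row_empty (ht : IsSVT n (rowShape s) t) {r c : ℕ} (hr : r ≠ 0) : t r c = ∅ :=
  ht.emptyOutside r c (by simp [rowShape, hr])

lemma col_empty (ht : IsSVT n (rowShape s) t) {c : ℕ} (hc : s ≤ c) : t 0 c = ∅ :=
  ht.emptyOutside 0 c (by simp [rowShape]; omega)

lemma box_ne (ht : IsSVT n (rowShape s) t) {c : ℕ} (hc : c < s) : (t 0 c).Nonempty :=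
  ht.boxNonempty 0 c (by simp [rowShape, hc])

lemma mem_lt_s (ht : IsSVT n (rowShape s) t) {a c : ℕ} (h : a ∈ t 0 c) : c < s := by
  by_contra hc
  rw [col_empty ht (by omega)] at h
  exact absurd h (Finset.notMem_empty a)

lemma row_sorted (ht : IsSVT n (rowShape s) t) {c c' a b : ℕ} (hcc : c < c')
    (ha : a ∈ t 0 c) (hb : b ∈ t 0 c') : a ≤ b := by
  induction c' generalizing b with
  | zero => omega
  | succ d ih =>
    rcases Nat.lt_or_ge c d with h | h
    · have hd : d < s := by have := mem_lt_s ht hb; omega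
      obtain ⟨y, hy⟩ := box_ne ht hd
      exact le_trans (ih h hy) (ht.rowWeak 0 d y b hy hb)
    · have : c = d := by omega
      subst this
      exact ht.rowWeak 0 c a b ha hb

lemma min_mem_box (ht : IsSVT n (rowShape s) t) {c : ℕ} (hc : c < s) :
    minE (t 0 c) ∈ t 0 c := minE_mem (box_ne ht hc)

lemma min_mono (ht : IsSVT n (rowShape s) t) {c c' : ℕ} (hcc : c ≤ c') (hc' : c' < s) :
    minE (t 0 c) ≤ minE (t 0 c') := by
  rcases Nat.eq_or_lt_of_le hcc with h | h
  · subst h; exact le_refl _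
  · exact row_sorted ht h (min_mem_box ht (by omega)) (min_mem_box ht hc')

lemma mem_interval (ht : IsSVT n (rowShape s) t) {a c c' c'' : ℕ} (h1 : a ∈ t 0 c)
    (h3 : a ∈ t 0 c'') (hc : c ≤ c') (hc' : c' ≤ c'') : a ∈ t 0 c' := by
  rcases Nat.eq_or_lt_of_le hc with h | h
  · subst h; exact h1
  rcases Nat.eq_or_lt_of_le hc' with h' | h'
  · subst h'; exact h3
  have hcs : c' < s := by have := mem_lt_s ht h3; omega
  obtain ⟨y, hy⟩ := box_ne ht hcs
  have h1' : a ≤ y := row_sorted ht h h1 hy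
  have h2' : y ≤ a := row_sorted ht h' hy h3
  have : y = a := by omega
  subst this; exact hy

lemma nonmin_unique (ht : IsSVT n (rowShape s) t) {a c c' : ℕ} (h1 : a ∈ t 0 c)
    (hne : a ≠ minE (t 0 c)) (h2 : a ∈ t 0 c') (hne' : a ≠ minE (t 0 c')) : c = c' := by
  by_contra hcc
  rcases Nat.lt_or_ge c c' with h | h
  · have hmlt : minE (t 0 c') < a := lt_of_le_of_ne (minE_le h2) (Ne.symm hne')
    have : a ≤ minE (t 0 c') :=
      row_sorted ht h h1 (min_mem_box ht (mem_lt_s ht h2))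
    omega
  · have h' : c' < c := by omega
    have hmlt : minE (t 0 c) < a := lt_of_le_of_ne (minE_le h1) (Ne.symm hne)
    have : a ≤ minE (t 0 c) :=
      row_sorted ht h' h2 (min_mem_box ht (mem_lt_s ht h1))
    omega

lemma Eset_bounds (ht : IsSVT n (rowShape s) t) {x : ℕ} (hx : x ∈ Eset s t) :
    2 ≤ x ∧ x ≤ n := by
  obtain ⟨c, hc, hmem, hne⟩ := mem_Eset.mp hx
  have h1 := ht.entryBounds 0 c x hmem
  have h2 := ht.entryBounds 0 c _ (min_mem_box ht hc)
  have h3 : minE (t 0 c) < x := lt_of_le_of_ne (minE_le hmem) (Ne.symm hne)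
  exact ⟨by omega, h1.2⟩

lemma Eset_card_lt (ht : IsSVT n (rowShape s) t) (hn : 1 ≤ n) : (Eset s t).card < n := by
  have hsub : Eset s t ⊆ Finset.Icc 2 n := by
    intro x hx
    have := Eset_bounds ht hx
    simp [Finset.mem_Icc]; omega
  have := Finset.card_le_card hsub
  rw [Nat.card_Icc] at this
  omega

lemma excess_row_eq (ht : IsSVT n (rowShape s) t) (hn : 1 ≤ n) :
    excess n (rowShape s) t = (Eset s t).card := by
  unfold excess
  rw [Finset.sum_product]
  rw [Finset.sum_eq_single_of_mem 0 (Finset.mem_range.mpr hn)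
    (fun r _ hr => by
      apply Finset.sum_eq_zero
      intro c _
      rw [row_empty ht hr]
      simp)]
  have hrw : ∀ c ∈ Finset.range (rowShape s 0), (t 0 c).card - 1 =
      ((t 0 c).erase (minE (t 0 c))).card := by
    intro c hc
    rw [Finset.card_erase_of_mem (min_mem_box ht (by simpa [rowShape] using hc))]
  rw [Finset.sum_congr rfl hrw]
  have : rowShape s 0 = s := rfl
  rw [this]
  rw [Eset, Finset.card_biUnion]
  intro c hc c' hc' hne
  simp only [Function.onFun, Finset.disjoint_left]
  intro x hx hx'
  rw [Finset.mem_erase] at hx hx'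
  exact hne (nonmin_unique ht hx.2 hx.1 hx'.2 hx'.1)

lemma colHas_row (ht : IsSVT n (rowShape s) t) (hn : 1 ≤ n) {a c : ℕ} :
    colHas n t a c ↔ a ∈ t 0 c := by
  constructor
  · rintro ⟨r, hr, hm⟩
    rcases Nat.eq_zero_or_pos r with h | h
    · subst h; exact hm
    · rw [row_empty ht (by omega)] at hm
      exact absurd hm (Finset.notMem_empty a)
  · intro h; exact ⟨0, hn, h⟩

/-! Psi structure -/

lemma L_length {s : ℕ} {t : Filling} : (uncrowdRest s t).length = (Eset s t).card :=
  Finset.length_sort _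

lemma mem_L_iff {s : ℕ} {t : Filling} {x : ℕ} : x ∈ uncrowdRest s t ↔ x ∈ Eset s t :=
  Finset.mem_sort _

lemma L_sorted {s : ℕ} {t : Filling} : (uncrowdRest s t).Pairwise (· < ·) :=
  (Finset.sortedLT_sort _).pairwise

lemma L_getD_mem {s : ℕ} {t : Filling} {k : ℕ} (hk : k < (uncrowdRest s t).length) :
    (uncrowdRest s t).getD k 0 ∈ Eset s t := by
  rw [List.getD_eq_getElem _ _ hk]
  exact mem_L_iff.mp (List.getElem_mem hk)

lemma L_getD_inj {s : ℕ} {t : Filling} {k k' : ℕ} (hk : k < (uncrowdRest s t).length)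
    (hk' : k' < (uncrowdRest s t).length)
    (h : (uncrowdRest s t).getD k 0 = (uncrowdRest s t).getD k' 0) : k = k' := by
  rw [List.getD_eq_getElem _ _ hk, List.getD_eq_getElem _ _ hk'] at h
  rcases Nat.lt_trichotomy k k' with hlt | heq | hgt
  · have := List.pairwise_iff_getElem.mp L_sorted k k' hk hk' hlt
    omega
  · exact heq
  · have := List.pairwise_iff_getElem.mp L_sorted k' k hk' hk hgt
    omega

lemma exists_idx_of_mem_E {s : ℕ} {t : Filling} {x : ℕ} (hx : x ∈ Eset s t) :
    ∃ k, k < (uncrowdRest s t).length ∧ (uncrowdRest s t).getD k 0 = x := by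
  have hx' : x ∈ uncrowdRest s t := mem_L_iff.mpr hx
  obtain ⟨k, hk, hkx⟩ := List.getElem_of_mem hx'
  exact ⟨k, hk, by rw [List.getD_eq_getElem _ _ hk]; exact hkx⟩

lemma psi_row0 {c : ℕ} (hc : c < s) : Psi s t 0 c = {minE (t 0 c)} := by
  simp [Psi, hc]

lemma psi_leg {r : ℕ} (hr1 : 1 ≤ r) (hr2 : r ≤ (uncrowdRest s t).length) :
    Psi s t r 0 = {(uncrowdRest s t).getD (r - 1) 0} := by
  have h1 : ¬ (r = 0 ∧ (0:ℕ) < s) := by omega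
  have h2 : (0:ℕ) = 0 ∧ 1 ≤ r ∧ r ≤ (uncrowdRest s t).length := ⟨rfl, hr1, hr2⟩
  simp only [Psi, if_neg h1]
  rw [if_pos (⟨trivial, hr1, hr2⟩ : True ∧ 1 ≤ r ∧ r ≤ (uncrowdRest s t).length)]

lemma psi_empty {r c : ℕ} (h1 : ¬ (r = 0 ∧ c < s)) 
    (h2 : ¬ (c = 0 ∧ 1 ≤ r ∧ r ≤ (uncrowdRest s t).length)) : Psi s t r c = ∅ := by
  unfold Psi
  rw [if_neg h1, if_neg h2]

lemma rowShape_lt_iff {s r c : ℕ} : c < rowShape s r ↔ r = 0 ∧ c < s := by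
  unfold rowShape
  split_ifs <;> omega

lemma mem_psi_iff {a r c : ℕ} :
    a ∈ Psi s t r c ↔ (r = 0 ∧ c < s ∧ a = minE (t 0 c)) ∨
      (c = 0 ∧ 1 ≤ r ∧ r ≤ (uncrowdRest s t).length ∧
        a = (uncrowdRest s t).getD (r - 1) 0) := by
  unfold Psi
  split_ifs with h1 h2
  · simp only [Finset.mem_singleton]
    constructor
    · intro h; exact Or.inl ⟨h1.1, h1.2, h⟩
    · rintro (⟨_, _, h⟩ | ⟨hc0, hr1, _, _⟩)
      · exact h
      · omega
  · simp only [Finset.mem_singleton]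
    constructor
    · intro h; exact Or.inr ⟨h2.1, h2.2.1, h2.2.2, h⟩
    · rintro (⟨hr0, hcs, _⟩ | ⟨_, _, _, h⟩)
      · exact absurd ⟨hr0, hcs⟩ h1
      · exact h
  · simp only [Finset.notMem_empty, false_iff]
    rintro (⟨hr0, hcs, _⟩ | ⟨hc0, hr1, hr2, _⟩)
    · exact h1 ⟨hr0, hcs⟩
    · exact h2 ⟨hc0, hr1, hr2⟩

lemma colHas_psi_pos (ht : IsSVT n (rowShape s) t) (hn : 1 ≤ n) {a c : ℕ} (hc : 1 ≤ c) :
    colHas n (Psi s t) a c ↔ (c < s ∧ a = minE (t 0 c)) := by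
  constructor
  · rintro ⟨r, hr, hm⟩
    rcases mem_psi_iff.mp hm with ⟨hr0, hcs, h⟩ | ⟨hc0, _, _, _⟩
    · exact ⟨hcs, h⟩
    · omega
  · rintro ⟨hcs, ha⟩
    exact ⟨0, hn, mem_psi_iff.mpr (Or.inl ⟨rfl, hcs, ha⟩)⟩

lemma colHas_psi_zero (ht : IsSVT n (rowShape s) t) (hn : 1 ≤ n) (hs : 1 ≤ s) {a : ℕ} :
    colHas n (Psi s t) a 0 ↔ (a = minE (t 0 0) ∨ a ∈ Eset s t) := by
  constructor
  · rintro ⟨r, hr, hm⟩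
    rcases mem_psi_iff.mp hm with ⟨_, _, h⟩ | ⟨_, hr1, hr2, h⟩
    · exact Or.inl h
    · exact Or.inr (h ▸ L_getD_mem (by omega))
  · rintro (h | h)
    · exact ⟨0, hn, mem_psi_iff.mpr (Or.inl ⟨rfl, hs, h⟩)⟩
    · obtain ⟨k, hk, hkx⟩ := exists_idx_of_mem_E h
      refine ⟨k + 1, ?_, mem_psi_iff.mpr (Or.inr ⟨rfl, by omega, by omega, by simpa using hkx.symm⟩)⟩
      have := Eset_card_lt ht hn
      have := L_length (s := s) (t := t)
      omega

lemma psi_col0_row_unique (ht : IsSVT n (rowShape s) t) {a r r' : ℕ}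
    (h : a ∈ Psi s t r 0) (h' : a ∈ Psi s t r' 0) : r = r' := by
  have key : ∀ b, b = minE (t 0 0) → b ∈ Eset s t → False := by
    intro b hb hbE
    obtain ⟨c, hc, hmem, hne⟩ := mem_Eset.mp hbE
    have h1 : minE (t 0 c) < b := lt_of_le_of_ne (minE_le hmem) (Ne.symm hne)
    have h2 : minE (t 0 0) ≤ minE (t 0 c) := min_mono ht (by omega) hc
    omega
  rcases mem_psi_iff.mp h with ⟨hr0, hcs, ha⟩ | ⟨_, hr1, hr2, ha⟩ <;>
    rcases mem_psi_iff.mp h' with ⟨hr0', hcs', ha'⟩ | ⟨_, hr1', hr2', ha'⟩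
  · omega
  · exact absurd (key a ha (ha' ▸ L_getD_mem (by omega))) (by simp)
  · exact absurd (key a ha' (ha ▸ L_getD_mem (by omega))) (by simp)
  · have := L_getD_inj (by omega) (by omega) (ha ▸ ha' ▸ rfl : (uncrowdRest s t).getD (r-1) 0 = (uncrowdRest s t).getD (r'-1) 0)
    omega

end RowLems
section SortLems

lemma sort_eq_of_sorted {E : Finset ℕ} {l : List ℕ} (hnd : l.Nodup) (hsort : l.Pairwise (· < ·))
    (hmem : ∀ x, x ∈ l ↔ x ∈ E) : E.sort (· ≤ ·) = l := by
  haveI : IsAntisymm ℕ (· < ·) := ⟨fun a b h h' => absurd h' (lt_asymm h)⟩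
  refine List.Perm.eq_of_pairwise' (r := (· < ·)) (E.sortedLT_sort).pairwise hsort
    (List.perm_of_nodup_nodup_toFinset_eq (E.sort_nodup _) hnd ?_)
  ext x
  simp only [List.mem_toFinset, Finset.mem_sort, hmem]

lemma sort_insert_erase {E : Finset ℕ} {x y : ℕ} (hx : x ∈ E) (hy : y ∉ E)
    (hmono : ∀ z ∈ E, z ≠ x → ((z < x ↔ z < y) ∧ (x < z ↔ y < z))) :
    (insert y (E.erase x)).sort (· ≤ ·) =
      (E.sort (· ≤ ·)).map (fun z => if z = x then y else z) := by
  set g : ℕ → ℕ := fun z => if z = x then y else z with hg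
  have hgsame : ∀ z, z ≠ x → g z = z := fun z hz => if_neg hz
  have hgx : g x = y := if_pos rfl
  have hglt : ∀ z ∈ E, ∀ w ∈ E, z < w → g z < g w := by
    intro z hz w hw hzw
    by_cases hzx : z = x
    · subst hzx
      rw [hgx, hgsame w (by omega)]
      exact ((hmono w hw (by omega)).2).mp hzw
    · rw [hgsame z hzx]
      by_cases hwx : w = x
      · subst hwx; rw [hgx]
        exact ((hmono z hz hzx).1).mp hzw
      · rw [hgsame w hwx]; exact hzw
  apply sort_eq_of_sorted
  · apply List.Nodup.map_on ?_ (E.sort_nodup _)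
    intro z hz w hw hzw
    rw [Finset.mem_sort] at hz hw
    by_contra hne
    rcases Nat.lt_or_ge z w with h | h
    · exact absurd (hglt z hz w hw h) (by omega)
    · have : w < z := by omega
      exact absurd (hglt w hw z hz this) (by omega)
  · rw [List.pairwise_iff_getElem]
    intro a b ha hb hab
    simp only [List.getElem_map]
    have hs := List.pairwise_iff_getElem.mp (E.sortedLT_sort).pairwise a b
      (by simpa using ha) (by simpa using hb) hab
    exact hglt _ ((Finset.mem_sort _).mp (List.getElem_mem _)) _
      ((Finset.mem_sort _).mp (List.getElem_mem _)) hs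
  · intro z
    simp only [List.mem_map, Finset.mem_sort, Finset.mem_insert, Finset.mem_erase]
    constructor
    · rintro ⟨w, hw, rfl⟩
      by_cases hwx : w = x
      · subst hwx; rw [hgx]; exact Or.inl rfl
      · rw [hgsame w hwx]; exact Or.inr ⟨hwx, hw⟩
    · rintro (rfl | ⟨hzx, hzE⟩)
      · exact ⟨x, hx, hgx⟩
      · exact ⟨z, hzE, hgsame z hzx⟩

end SortLems

section Conj12

variable {n s : ℕ} {t : Filling}

lemma L_len_eq_excess (ht : IsSVT n (rowShape s) t) (hn : 1 ≤ n) :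
    (uncrowdRest s t).length = excess n (rowShape s) t := by
  rw [L_length, excess_row_eq ht hn]

lemma hook_lt_iff {s e r c : ℕ} : c < hookShape s e r ↔ (r = 0 ∧ c < s) ∨ (r ≠ 0 ∧ r ≤ e ∧ c = 0) := by
  unfold hookShape
  split_ifs <;> omega

theorem psi_is_ssyt (ht : IsSVT n (rowShape s) t) (hn : 1 ≤ n) (hs : 1 ≤ s) :
    IsSSYT n (hookShape s (excess n (rowShape s) t)) (Psi s t) := by
  set e := excess n (rowShape s) t with he
  have heL : (uncrowdRest s t).length = e := L_len_eq_excess ht hn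
  constructor
  · constructor
    · -- boxNonempty
      intro r c hc
      rcases hook_lt_iff.mp hc with ⟨rfl, hcs⟩ | ⟨hr0, hre, rfl⟩
      · rw [psi_row0 hcs]; exact ⟨_, Finset.mem_singleton_self _⟩
      · rw [psi_leg (by omega) (by omega)]
        exact ⟨_, Finset.mem_singleton_self _⟩
    · -- emptyOutside
      intro r c hc
      apply Finset.eq_empty_iff_forall_notMem.mpr
      intro a ha
      rcases mem_psi_iff.mp ha with ⟨rfl, hcs, _⟩ | ⟨rfl, hr1, hr2, _⟩
      · exact hc (hook_lt_iff.mpr (Or.inl ⟨rfl, hcs⟩))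
      · exact hc (hook_lt_iff.mpr (Or.inr ⟨by omega, by omega, rfl⟩))
    · -- entryBounds
      intro r c a ha
      rcases mem_psi_iff.mp ha with ⟨rfl, hcs, rfl⟩ | ⟨rfl, hr1, hr2, rfl⟩
      · exact ht.entryBounds 0 c _ (min_mem_box ht hcs)
      · have := Eset_bounds ht (L_getD_mem (k := r - 1) (by omega))
        omega
    · -- rowWeak
      intro r c a b ha hb
      rcases mem_psi_iff.mp hb with ⟨rfl, hcs, rfl⟩ | ⟨hc1, _, _, _⟩
      · rcases mem_psi_iff.mp ha with ⟨_, hcs', rfl⟩ | ⟨_, hr1, _, _⟩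
        · exact min_mono ht (by omega) hcs
        · omega
      · omega
    · -- colStrict
      intro r c a b ha hb
      rcases mem_psi_iff.mp hb with ⟨hr0, _, _⟩ | ⟨rfl, hr1, hr2, rfl⟩
      · omega
      · rcases mem_psi_iff.mp ha with ⟨rfl, hcs, rfl⟩ | ⟨_, hr1', hr2', rfl⟩
        · -- corner vs first leg entry
          obtain ⟨c0, hc0, hm, hne⟩ := mem_Eset.mp (L_getD_mem (s := s) (t := t) (k := 0) (by omega))
          have h1 : minE (t 0 c0) < (uncrowdRest s t).getD 0 0 :=
            lt_of_le_of_ne (minE_le hm) (Ne.symm hne)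
          have h2 : minE (t 0 0) ≤ minE (t 0 c0) := min_mono ht (Nat.zero_le _) hc0
          simpa using lt_of_le_of_lt h2 h1
        · have hlt : r - 1 < r + 1 - 1 := by omega
          have h1 : r + 1 - 1 < (uncrowdRest s t).length := by omega
          have h2 : r - 1 < (uncrowdRest s t).length := by omega
          rw [List.getD_eq_getElem _ _ h2, List.getD_eq_getElem _ _ h1]
          exact List.pairwise_iff_getElem.mp L_sorted _ _ h2 h1 hlt
  · -- singletons
    intro r c hc
    rcases hook_lt_iff.mp hc with ⟨rfl, hcs⟩ | ⟨hr0, hre, rfl⟩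
    · rw [psi_row0 hcs]; simp
    · rw [psi_leg (by omega) (by omega)]; simp

lemma box_eq (ht : IsSVT n (rowShape s) t) {c : ℕ} (hc : c < s) :
    t 0 c = insert (minE (t 0 c)) ((Eset s t).filter
      (fun x => minE (t 0 c) < x ∧ (c + 1 < s → x ≤ minE (t 0 (c + 1))))) := by
  ext y
  simp only [Finset.mem_insert, Finset.mem_filter]
  constructor
  · intro hy
    by_cases hym : y = minE (t 0 c)
    · exact Or.inl hym
    · refine Or.inr ⟨mem_Eset.mpr ⟨c, hc, hy, hym⟩,
        lt_of_le_of_ne (minE_le hy) (Ne.symm hym), ?_⟩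
      intro hc1
      exact ht.rowWeak 0 c y _ hy (min_mem_box ht hc1)
  · rintro (rfl | ⟨hyE, hylt, hyle⟩)
    · exact min_mem_box ht hc
    · obtain ⟨c0, hc0, hm, hne⟩ := mem_Eset.mp hyE
      rcases Nat.lt_trichotomy c0 c with h | h | h
      · have : y ≤ minE (t 0 c) := row_sorted ht h hm (min_mem_box ht hc)
        omega
      · subst h; exact hm
      · have hc1 : c + 1 < s := by
          rcases Nat.eq_or_lt_of_le (Nat.succ_le_of_lt h) with h' | h'
          · omega
          · omega
        exfalso
        have h2 : minE (t 0 (c + 1)) ≤ minE (t 0 c0) := min_mono ht (by omega) hc0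
        have h3 : minE (t 0 c0) < y := lt_of_le_of_ne (minE_le hm) (Ne.symm hne)
        have := hyle hc1
        omega

theorem psi_injective {t' : Filling} (ht : IsSVT n (rowShape s) t)
    (ht' : IsSVT n (rowShape s) t') (h : Psi s t = Psi s t') : t = t' := by
  have hmins : ∀ c, c < s → minE (t 0 c) = minE (t' 0 c) := by
    intro c hc
    have := congrFun (congrFun h 0) c
    rw [psi_row0 hc, psi_row0 hc] at this
    exact Finset.singleton_injective this
  have hE : Eset s t = Eset s t' := by
    ext x
    constructor
    · intro hx
      obtain ⟨k, hk, hkx⟩ := exists_idx_of_mem_E hx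
      have hmem : x ∈ Psi s t (k + 1) 0 :=
        mem_psi_iff.mpr (Or.inr ⟨rfl, by omega, by omega, by simpa using hkx.symm⟩)
      rw [h] at hmem
      rcases mem_psi_iff.mp hmem with ⟨h0, _, _⟩ | ⟨_, _, hr2, hx'⟩
      · omega
      · exact hx' ▸ L_getD_mem (by omega)
    · intro hx
      obtain ⟨k, hk, hkx⟩ := exists_idx_of_mem_E hx
      have hmem : x ∈ Psi s t' (k + 1) 0 :=
        mem_psi_iff.mpr (Or.inr ⟨rfl, by omega, by omega, by simpa using hkx.symm⟩)
      rw [← h] at hmem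
      rcases mem_psi_iff.mp hmem with ⟨h0, _, _⟩ | ⟨_, _, hr2, hx'⟩
      · omega
      · exact hx' ▸ L_getD_mem (by omega)
  funext r c
  rcases Nat.eq_zero_or_pos r with hr | hr
  · subst hr
    rcases Nat.lt_or_ge c s with hc | hc
    · rw [box_eq ht hc, box_eq ht' hc, hE, hmins c hc]
      by_cases hc1 : c + 1 < s
      · rw [hmins (c + 1) hc1]
      · congr 1
        apply Finset.filter_congr
        intro x _
        constructor
        · rintro ⟨h1, _⟩; exact ⟨h1, fun hcon => absurd hcon hc1⟩
        · rintro ⟨h1, _⟩; exact ⟨h1, fun hcon => absurd hcon hc1⟩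
    · rw [col_empty ht hc, col_empty ht' hc]
  · rw [row_empty ht (by omega), row_empty ht' (by omega)]

end Conj12
section Conj3

lemma row0_sorted_gen {n : ℕ} {lam : ℕ → ℕ} {u : Filling} (hu : IsSVT n lam u)
    {c c' a b : ℕ} (hcc : c < c') (hc' : c' < lam 0) (ha : a ∈ u 0 c) (hb : b ∈ u 0 c') :
    a ≤ b := by
  induction c' generalizing b with
  | zero => omega
  | succ d ih =>
    rcases Nat.lt_or_ge c d with h | h
    · obtain ⟨y, hy⟩ := hu.boxNonempty 0 d (by omega)
      exact le_trans (ih h (by omega) hy) (hu.rowWeak 0 d y b hy hb)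
    · have : c = d := by omega
      subst this
      exact hu.rowWeak 0 c a b ha hb

lemma usingleton {n : ℕ} {lam : ℕ → ℕ} {u : Filling} (hu : IsSSYT n lam u) {r c : ℕ}
    (hrc : c < lam r) : u r c = {minE (u r c)} := by
  obtain ⟨a, ha⟩ := Finset.card_eq_one.mp (hu.2 r c hrc)
  rw [ha]
  congr 1
  rw [ha] at *
  exact (minE_eq (Finset.mem_singleton_self a) (fun y hy => le_of_eq (Finset.mem_singleton.mp hy).symm)).symm

/-- The inverse (crowding) map. -/
def crowd (s e : ℕ) (u : Filling) : Filling := fun r c =>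
  match r with
  | 0 =>
    if c < s then
      insert (minE (u 0 c)) (((Finset.range e).biUnion (fun k => u (k + 1) 0)).filter
        (fun x => minE (u 0 c) < x ∧ (c + 1 < s → x ≤ minE (u 0 (c + 1))))) else ∅
  | _ + 1 => ∅

lemma crowd_zero (s e : ℕ) (u : Filling) (c : ℕ) (hc : c < s) :
    crowd s e u 0 c = insert (minE (u 0 c)) (((Finset.range e).biUnion (fun k => u (k + 1) 0)).filter
      (fun x => minE (u 0 c) < x ∧ (c + 1 < s → x ≤ minE (u 0 (c + 1))))) := by
  show (if c < s then _ else ∅) = _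
  rw [if_pos hc]

lemma crowd_empty (s e : ℕ) (u : Filling) {r c : ℕ} (h : ¬ (r = 0 ∧ c < s)) :
    crowd s e u r c = ∅ := by
  match r with
  | 0 =>
    show (if c < s then _ else ∅) = ∅
    rw [if_neg (by omega)]
  | r + 1 => rfl

theorem psi_surjective {n s e : ℕ} {u : Filling} (hu : IsSSYT n (hookShape s e) u)
    (hn : 1 ≤ n) (hs : 1 ≤ s) :
    ∃ t, IsSVT n (rowShape s) t ∧ excess n (rowShape s) t = e ∧ Psi s t = u := by
  set μ : ℕ → ℕ := fun c => minE (u 0 c) with hμ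
  set ν : ℕ → ℕ := fun r => minE (u r 0) with hν
  have hhook0 : hookShape s e 0 = s := rfl
  have hbox0ne : ∀ r, r ≤ e → (u r 0).Nonempty := by
    intro r hr
    apply hu.1.boxNonempty
    rcases Nat.eq_zero_or_pos r with h | h
    · subst h; rw [hhook0]; omega
    · simp only [hookShape]
      rw [if_neg (by omega), if_pos hr]; omega
  have hrowne : ∀ c, c < s → (u 0 c).Nonempty := fun c hc => hu.1.boxNonempty 0 c (by rw [hhook0]; omega)
  have husing0 : ∀ c, c < s → u 0 c = {μ c} := fun c hc => usingleton hu (by rw [hhook0]; omega)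
  have husingleg : ∀ r, 1 ≤ r → r ≤ e → u r 0 = {ν r} := by
    intro r h1 h2
    apply usingleton hu
    simp only [hookShape]
    rw [if_neg (by omega), if_pos h2]; omega
  have hlegstep : ∀ r, r + 1 ≤ e → ν r < ν (r + 1) := by
    intro r hr
    exact hu.1.colStrict r 0 _ _ (minE_mem (hbox0ne r (by omega))) (minE_mem (hbox0ne (r+1) hr))
  have hleg : ∀ r r', r < r' → r' ≤ e → ν r < ν r' := by
    intro r r' h h'
    induction r' with
    | zero => omega
    | succ d ih =>
      rcases Nat.lt_or_ge r d with hh | hh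
      · exact lt_trans (ih hh (by omega)) (hlegstep d h')
      · have : r = d := by omega
        subst this
        exact hlegstep r h'
  have hmono : ∀ c c', c ≤ c' → c' < s → μ c ≤ μ c' := by
    intro c c' hcc hc'
    rcases Nat.eq_or_lt_of_le hcc with h | h
    · subst h; exact le_refl _
    · exact row0_sorted_gen hu.1 h (by rw [hhook0]; omega) (minE_mem (hrowne c (by omega)))
        (minE_mem (hrowne c' hc'))
  set Eu : Finset ℕ := (Finset.range e).biUnion (fun k => u (k + 1) 0) with hEu
  have mem_Eu : ∀ x, x ∈ Eu ↔ ∃ k, k < e ∧ x = ν (k + 1) := by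
    intro x
    simp only [hEu, Finset.mem_biUnion, Finset.mem_range]
    constructor
    · rintro ⟨k, hk, hm⟩
      rw [husingleg (k+1) (by omega) (by omega)] at hm
      exact ⟨k, hk, Finset.mem_singleton.mp hm⟩
    · rintro ⟨k, hk, rfl⟩
      exact ⟨k, hk, by rw [husingleg (k+1) (by omega) (by omega)]; simp⟩
  have hEu_gt : ∀ x ∈ Eu, μ 0 < x := by
    intro x hx
    obtain ⟨k, hk, rfl⟩ := (mem_Eu x).mp hx
    exact hleg 0 (k+1) (by omega) (by omega)
  have assign : ∀ x ∈ Eu, ∃ c, c < s ∧ μ c < x ∧ (c + 1 < s → x ≤ μ (c + 1)) := by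
    intro x hx
    set c := Nat.findGreatest (fun c => μ c < x) (s - 1) with hc
    have hspec : μ c < x := by
      rw [hc]
      exact Nat.findGreatest_spec (P := fun c => μ c < x) (m := 0) (Nat.zero_le _) (hEu_gt x hx)
    refine ⟨c, by have := Nat.findGreatest_le (P := fun c => μ c < x) (s-1); omega, hspec, ?_⟩
    intro hc1
    by_contra hcon
    have : c + 1 ≤ c := Nat.le_findGreatest (by omega) (by omega)
    omega
  have assign_unique : ∀ x, ∀ c1 c2, c1 < s → μ c1 < x → (c1 + 1 < s → x ≤ μ (c1 + 1)) →
      c2 < s → μ c2 < x → (c2 + 1 < s → x ≤ μ (c2 + 1)) → c1 = c2 := by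
    intro x c1 c2 h1 h2 h3 h4 h5 h6
    by_contra hne
    rcases Nat.lt_or_ge c1 c2 with h | h
    · have hc11 : c1 + 1 < s := by omega
      have := h3 hc11
      have := hmono (c1 + 1) c2 (by omega) h4
      omega
    · have hc21 : c2 + 1 < s := by omega
      have := h6 hc21
      have := hmono (c2 + 1) c1 (by omega) h1
      omega
  set t := crowd s e u with ht_def
  have hbox : ∀ c, c < s → t 0 c = insert (μ c)
      (Eu.filter (fun x => μ c < x ∧ (c + 1 < s → x ≤ μ (c + 1)))) := by
    intro c hc
    exact crowd_zero s e u c hc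
  have hboxE : ∀ r c, ¬ (r = 0 ∧ c < s) → t r c = ∅ := by
    intro r c hrc
    exact crowd_empty s e u hrc
  have hminc : ∀ c, c < s → minE (t 0 c) = μ c := by
    intro c hc
    rw [hbox c hc]
    apply minE_eq (Finset.mem_insert_self _ _)
    intro y hy
    rcases Finset.mem_insert.mp hy with rfl | hy'
    · exact le_refl _
    · have := (Finset.mem_filter.mp hy').2.1
      omega
  have hsvt : IsSVT n (rowShape s) t := by
    constructor
    · intro r c hc
      obtain ⟨rfl, hcs⟩ := rowShape_lt_iff.mp hc
      rw [hbox c hcs]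
      exact ⟨_, Finset.mem_insert_self _ _⟩
    · intro r c hc
      apply hboxE
      rintro ⟨rfl, hcs⟩
      exact hc (rowShape_lt_iff.mpr ⟨rfl, hcs⟩)
    · intro r c a ha
      rcases Nat.eq_zero_or_pos r with rfl | hr
      · rcases Nat.lt_or_ge c s with hc | hc
        · rw [hbox c hc] at ha
          rcases Finset.mem_insert.mp ha with rfl | ha'
          · exact hu.1.entryBounds 0 c _ (minE_mem (hrowne c hc))
          · obtain ⟨hm, _⟩ := Finset.mem_filter.mp ha'
            obtain ⟨k, hk, hmem⟩ := Finset.mem_biUnion.mp hm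
            exact hu.1.entryBounds (k+1) 0 a hmem
        · rw [hboxE 0 c (by omega)] at ha
          exact absurd ha (Finset.notMem_empty a)
      · rw [hboxE r c (by omega)] at ha
        exact absurd ha (Finset.notMem_empty a)
    · intro r c a b ha hb
      rcases Nat.eq_zero_or_pos r with rfl | hr
      · rcases Nat.lt_or_ge (c+1) s with hc1 | hc1
        · have hcs : c < s := by omega
          rw [hbox c hcs] at ha
          rw [hbox (c+1) hc1] at hb
          have hb' : μ (c+1) ≤ b := by
            rcases Finset.mem_insert.mp hb with rfl | hb'
            · exact le_refl _
            · have := (Finset.mem_filter.mp hb').2.1; omega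
          have ha' : a ≤ μ (c+1) := by
            rcases Finset.mem_insert.mp ha with rfl | ha'
            · exact hmono c (c+1) (by omega) hc1
            · exact (Finset.mem_filter.mp ha').2.2 hc1
          omega
        · rw [hboxE 0 (c+1) (by omega)] at hb
          exact absurd hb (Finset.notMem_empty b)
      · rw [hboxE r c (by omega)] at ha
        exact absurd ha (Finset.notMem_empty a)
    · intro r c a b ha hb
      rw [hboxE (r+1) c (by omega)] at hb
      exact absurd hb (Finset.notMem_empty b)
  have hEeq : Eset s t = Eu := by
    ext x
    rw [mem_Eset]
    constructor
    · rintro ⟨c, hc, hm, hne⟩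
      rw [hminc c hc] at hne
      rw [hbox c hc] at hm
      rcases Finset.mem_insert.mp hm with rfl | hm'
      · exact absurd rfl hne
      · exact (Finset.mem_filter.mp hm').1
    · intro hx
      obtain ⟨c, hc, h1, h2⟩ := assign x hx
      refine ⟨c, hc, ?_, ?_⟩
      · rw [hbox c hc]
        exact Finset.mem_insert_of_mem (Finset.mem_filter.mpr ⟨hx, h1, h2⟩)
      · rw [hminc c hc]; omega
  have hcardEu : Eu.card = e := by
    rw [hEu, Finset.card_biUnion]
    · have : ∀ k ∈ Finset.range e, (u (k+1) 0).card = 1 := by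
        intro k hk
        have hk' : k < e := Finset.mem_range.mp hk
        rw [husingleg (k+1) (by omega) (by omega)]
        simp
      rw [Finset.sum_congr rfl this]
      simp
    · intro k hk k' hk' hne
      simp only [Function.onFun, Finset.disjoint_left]
      intro x hx hx'
      rw [husingleg (k+1) (by omega) (by simpa using hk), Finset.mem_singleton] at hx
      rw [husingleg (k'+1) (by omega) (by simpa using hk'), Finset.mem_singleton] at hx'
      rcases Nat.lt_or_ge k k' with h | h
      · have := hleg (k+1) (k'+1) (by omega) (by simpa using hk')
        omega
      · have := hleg (k'+1) (k+1) (by omega) (by simpa using hk)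
        omega
  have hLeq : uncrowdRest s t = (List.range e).map (fun k => ν (k + 1)) := by
    rw [uncrowdRest_def, hEeq]
    apply sort_eq_of_sorted
    · apply List.Nodup.map_on ?_ (List.nodup_range (n := e))
      intro z hz w hw hzw
      rw [List.mem_range] at hz hw
      by_contra hne
      rcases Nat.lt_or_ge z w with h | h
      · have := hleg (z+1) (w+1) (by omega) (by omega); omega
      · have := hleg (w+1) (z+1) (by omega) (by omega); omega
    · rw [List.pairwise_iff_getElem]
      intro a b ha hb hab
      simp only [List.getElem_map, List.getElem_range]
      simp only [List.length_map, List.length_range] at ha hb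
      exact hleg (a+1) (b+1) (by omega) (by omega)
    · intro x
      rw [mem_Eu]
      simp only [List.mem_map, List.mem_range]
      constructor
      · rintro ⟨k, hk, rfl⟩; exact ⟨k, hk, rfl⟩
      · rintro ⟨k, hk, rfl⟩; exact ⟨k, hk, rfl⟩
  have hLlen : (uncrowdRest s t).length = e := by rw [hLeq]; simp
  refine ⟨t, hsvt, ?_, ?_⟩
  · rw [excess_row_eq hsvt hn, hEeq, hcardEu]
  · funext r c
    rcases Nat.eq_zero_or_pos r with rfl | hr
    · rcases Nat.lt_or_ge c s with hc | hc
      · rw [psi_row0 hc, hminc c hc, husing0 c hc]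
      · rw [psi_empty (by omega) (by omega)]
        rw [hu.1.emptyOutside 0 c (by rw [hhook0]; omega)]
    · by_cases hcase : c = 0 ∧ r ≤ e
      · obtain ⟨rfl, hre⟩ := hcase
        rw [psi_leg (by omega) (by omega)]
        rw [husingleg r (by omega) hre]
        congr 1
        rw [hLeq]
        rw [List.getD_eq_getElem _ _ (by simp; omega)]
        simp only [List.getElem_map, List.getElem_range]
        congr 1
        omega
      · rw [psi_empty (by omega) (by rw [hLlen]; omega)]
        rw [hu.1.emptyOutside r c ?_]
        rw [hook_lt_iff]
        omega

end Conj3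
section Conj4

variable {n s : ℕ} {t : Filling}

theorem psi_wt (ht : IsSVT n (rowShape s) t) (hn : 1 ≤ n) (hs : 1 ≤ s) (j : ℕ) :
    wt n (hookShape s (excess n (rowShape s) t)) (Psi s t) j = wt n (rowShape s) t j := by
  unfold wt
  have h0 : hookShape s (excess n (rowShape s) t) 0 = s := rfl
  have h0' : rowShape s 0 = s := rfl
  rw [h0, h0']
  rw [Finset.card_filter, Finset.card_filter, Finset.sum_product, Finset.sum_product]
  have h0mem : (0 : ℕ) ∈ Finset.range n := Finset.mem_range.mpr hn
  rw [← Finset.insert_erase h0mem, Finset.sum_insert (Finset.notMem_erase 0 _),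
    Finset.sum_insert (Finset.notMem_erase 0 _)]
  -- rows ≥ 1 on the t side vanish
  have hRHS : ∑ r ∈ (Finset.range n).erase 0, ∑ c ∈ Finset.range s,
      (if j ∈ t r c then 1 else 0) = 0 := by
    apply Finset.sum_eq_zero
    intro r hr
    apply Finset.sum_eq_zero
    intro c _
    rw [row_empty ht (Finset.ne_of_mem_erase hr)]
    simp
  -- rows ≥ 1 on the Psi side: only column 0 counts
  have hLleg : ∀ r ∈ (Finset.range n).erase 0, ∑ c ∈ Finset.range s,
      (if j ∈ Psi s t r c then 1 else 0) = (if j ∈ Psi s t r 0 then 1 else 0) := by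
    intro r hr
    have hr0 : r ≠ 0 := Finset.ne_of_mem_erase hr
    rw [Finset.sum_eq_single_of_mem 0 (Finset.mem_range.mpr hs)]
    intro c _ hc0
    rw [psi_empty (by omega) (by omega)]
    simp
  rw [Finset.sum_congr rfl hLleg, hRHS]
  have hleg_sum : ∑ r ∈ (Finset.range n).erase 0, (if j ∈ Psi s t r 0 then 1 else 0) =
      (if j ∈ Eset s t then 1 else 0) := by
    by_cases hjE : j ∈ Eset s t
    · rw [if_pos hjE]
      obtain ⟨k, hk, hkj⟩ := exists_idx_of_mem_E hjE
      have hkn : k + 1 < n := by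
        have := Eset_card_lt ht hn
        have := L_length (s := s) (t := t)
        omega
      have hmem : j ∈ Psi s t (k + 1) 0 :=
        mem_psi_iff.mpr (Or.inr ⟨rfl, by omega, by omega, by simpa using hkj.symm⟩)
      rw [Finset.sum_eq_single_of_mem (k + 1)
        (Finset.mem_erase.mpr ⟨by omega, Finset.mem_range.mpr hkn⟩)]
      · rw [if_pos hmem]
      · intro r hr hrk
        rw [if_neg]
        intro hcon
        exact hrk (psi_col0_row_unique ht hcon hmem)
    · rw [if_neg hjE]
      apply Finset.sum_eq_zero
      intro r hr
      rw [if_neg]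
      intro hcon
      rcases mem_psi_iff.mp hcon with ⟨hr0, _, _⟩ | ⟨_, _, hr2, hj⟩
      · exact (Finset.ne_of_mem_erase hr) hr0
      · exact hjE (hj ▸ L_getD_mem (by omega))
  rw [hleg_sum]
  -- row 0 on the Psi side
  have hrow0 : ∑ c ∈ Finset.range s, (if j ∈ Psi s t 0 c then 1 else 0) =
      ∑ c ∈ Finset.range s, (if j = minE (t 0 c) then 1 else 0) := by
    apply Finset.sum_congr rfl
    intro c hc
    rw [psi_row0 (Finset.mem_range.mp hc)]
    simp
  rw [hrow0]
  -- pointwise decomposition on the t side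
  have hpt : ∀ c ∈ Finset.range s, (if j ∈ t 0 c then 1 else 0) =
      (if j = minE (t 0 c) then 1 else 0) +
      (if j ∈ t 0 c ∧ j ≠ minE (t 0 c) then 1 else 0) := by
    intro c hc
    have hcs := Finset.mem_range.mp hc
    by_cases h1 : j = minE (t 0 c)
    · rw [if_pos h1, if_pos (h1 ▸ min_mem_box ht hcs), if_neg (by tauto)]
    · by_cases h2 : j ∈ t 0 c
      · rw [if_pos h2, if_neg h1, if_pos ⟨h2, h1⟩]
      · rw [if_neg h2, if_neg h1, if_neg (by tauto)]
  rw [Finset.sum_congr rfl hpt, Finset.sum_add_distrib]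
  have hnonmin : (∑ c ∈ Finset.range s, if j ∈ t 0 c ∧ j ≠ minE (t 0 c) then 1 else 0) =
      (if j ∈ Eset s t then (1:ℕ) else 0) := by
    by_cases hjE : j ∈ Eset s t
    · rw [if_pos hjE]
      obtain ⟨c0, hc0, hm0, hne0⟩ := mem_Eset.mp hjE
      rw [Finset.sum_eq_single_of_mem c0 (Finset.mem_range.mpr hc0)]
      · rw [if_pos ⟨hm0, hne0⟩]
      · intro c _ hcc
        rw [if_neg]
        rintro ⟨h1, h2⟩
        exact hcc (nonmin_unique ht h1 h2 hm0 hne0)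
    · rw [if_neg hjE]
      apply Finset.sum_eq_zero
      intro c hc
      rw [if_neg]
      rintro ⟨h1, h2⟩
      exact hjE (mem_Eset.mpr ⟨c, Finset.mem_range.mp hc, h1, h2⟩)
  rw [hnonmin]
  omega

end Conj4
section Conj5Helpers

variable {n s i : ℕ} {t : Filling}

lemma updateBox_same (t : Filling) (r c : ℕ) (A : Finset ℕ) : updateBox t r c A r c = A := by
  simp [updateBox]

lemma updateBox_other (t : Filling) (r c : ℕ) (A : Finset ℕ) {r' c' : ℕ}
    (h : ¬ (r' = r ∧ c' = c)) : updateBox t r c A r' c' = t r' c' := by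
  simp only [updateBox, if_neg h]

lemma colSign_none_of {u : Filling} {c : ℕ} (h1 : ¬ colHas n u i c)
    (h2 : ¬ colHas n u (i + 1) c) : colSign n u i c = none := by
  unfold colSign
  rw [if_neg (by tauto), if_neg (by tauto)]

lemma plusCol_row (ht : IsSVT n (rowShape s) t) (hn : 1 ≤ n) {c : ℕ} :
    PlusCol n s t i c ↔ c < s ∧ i ∈ t 0 c ∧ (i + 1) ∉ t 0 c := by
  constructor
  · rintro ⟨hc, hsign, _⟩
    obtain ⟨h1, h2⟩ := colSign_true_iff.mp hsign
    exact ⟨hc, (colHas_row ht hn).mp h1, fun hcon => h2 ((colHas_row ht hn).mpr hcon)⟩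
  · rintro ⟨hc, h1, h2⟩
    refine ⟨hc, colSign_true_iff.mpr ⟨(colHas_row ht hn).mpr h1,
      fun hcon => h2 ((colHas_row ht hn).mp hcon)⟩, ?_⟩
    apply mctr_before_zero
    intro j hj hcon
    obtain ⟨hh1, _⟩ := colSign_false_iff.mp hcon
    have := row_sorted ht hj ((colHas_row ht hn).mp hh1) h1
    omega

lemma minusCol_row (ht : IsSVT n (rowShape s) t) (hn : 1 ≤ n) {c : ℕ} :
    MinusCol n s t i c ↔ c < s ∧ (i + 1) ∈ t 0 c ∧ i ∉ t 0 c := by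
  constructor
  · rintro ⟨hc, hsign, _⟩
    obtain ⟨h1, h2⟩ := colSign_false_iff.mp hsign
    exact ⟨hc, (colHas_row ht hn).mp h1, fun hcon => h2 ((colHas_row ht hn).mpr hcon)⟩
  · rintro ⟨hc, h1, h2⟩
    refine ⟨hc, colSign_false_iff.mpr ⟨(colHas_row ht hn).mpr h1,
      fun hcon => h2 ((colHas_row ht hn).mp hcon)⟩, ?_⟩
    apply pctr_after_zero
    intro j hcj hjs hcon
    obtain ⟨hh1, _⟩ := colSign_true_iff.mp hcon
    have := row_sorted ht hcj h1 ((colHas_row ht hn).mp hh1)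
    omega

lemma psi_eq_update_row0 {t' : Filling} {d v : ℕ} (hds : d < s)
    (hmins : ∀ c, c < s → c ≠ d → minE (t' 0 c) = minE (t 0 c))
    (hmind : minE (t' 0 d) = v)
    (hrest : uncrowdRest s t' = uncrowdRest s t) :
    Psi s t' = updateBox (Psi s t) 0 d {v} := by
  funext r c
  by_cases h : r = 0 ∧ c = d
  · obtain ⟨rfl, rfl⟩ := h
    rw [updateBox_same, psi_row0 hds, hmind]
  · rw [updateBox_other _ _ _ _ h]
    by_cases hr : r = 0
    · subst hr
      have hcd : c ≠ d := fun hc => h ⟨rfl, hc⟩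
      by_cases hcs : c < s
      · rw [psi_row0 hcs, psi_row0 hcs, hmins c hcs hcd]
      · rw [psi_empty (by omega) (by omega), psi_empty (by omega) (by omega)]
    · show Psi s t' r c = Psi s t r c
      unfold Psi
      rw [hrest]
      rw [if_neg (fun hh : r = 0 ∧ c < s => hr hh.1),
        if_neg (fun hh : r = 0 ∧ c < s => hr hh.1)]

lemma psi_eq_update_leg {t' : Filling} {k x y : ℕ}
    (hmins : ∀ c, c < s → minE (t' 0 c) = minE (t 0 c))
    (hk : k < (uncrowdRest s t).length)
    (hrest : uncrowdRest s t' = (uncrowdRest s t).map (fun z => if z = x then y else z))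
    (hgetk : (uncrowdRest s t).getD k 0 = x) :
    Psi s t' = updateBox (Psi s t) (k + 1) 0 {y} := by
  have hlen : (uncrowdRest s t').length = (uncrowdRest s t).length := by
    rw [hrest, List.length_map]
  have hget : ∀ j, j < (uncrowdRest s t).length →
      (uncrowdRest s t').getD j 0 = (if (uncrowdRest s t).getD j 0 = x then y
        else (uncrowdRest s t).getD j 0) := by
    intro j hj
    rw [List.getD_eq_getElem _ _ (by omega), List.getD_eq_getElem _ _ hj]
    simp only [hrest, List.getElem_map]
  funext r c
  by_cases h : r = k + 1 ∧ c = 0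
  · obtain ⟨rfl, rfl⟩ := h
    rw [updateBox_same, psi_leg (by omega) (by omega)]
    simp only [Nat.add_sub_cancel]
    rw [hget k hk, hgetk, if_pos rfl]
  · rw [updateBox_other _ _ _ _ h]
    by_cases hr : r = 0
    · subst hr
      by_cases hcs : c < s
      · rw [psi_row0 hcs, psi_row0 hcs, hmins c hcs]
      · rw [psi_empty (by omega) (by omega), psi_empty (by omega) (by omega)]
    · by_cases hc : c = 0 ∧ 1 ≤ r ∧ r ≤ (uncrowdRest s t).length
      · obtain ⟨rfl, hr1, hr2⟩ := hc
        have hrk : r ≠ k + 1 := fun hh => h ⟨hh, rfl⟩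
        rw [psi_leg hr1 (by omega), psi_leg hr1 hr2, hget (r-1) (by omega)]
        rw [if_neg]
        intro hcon
        have := L_getD_inj (s := s) (t := t) (by omega) hk (hcon.trans hgetk.symm)
        omega
      · rw [psi_empty (by omega) (by rw [hlen]; omega), psi_empty (by omega) (by omega)]

end Conj5Helpers
section Conj5F

variable {n s i : ℕ} {t : Filling}

lemma Eset_congr {t₁ t₂ : Filling}
    (h : ∀ c, c < s → (t₁ 0 c).erase (minE (t₁ 0 c)) = (t₂ 0 c).erase (minE (t₂ 0 c))) :
    Eset s t₁ = Eset s t₂ := by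
  unfold Eset
  apply Finset.biUnion_congr rfl
  intro c hc
  exact h c (Finset.mem_range.mp hc)

theorem f_commute (ht : IsSVT n (rowShape s) t) (hn : 1 ≤ n) (hs : 1 ≤ s) :
    (fRaw n (rowShape s) i t = none ↔
      fRaw n (hookShape s (excess n (rowShape s) t)) i (Psi s t) = none) ∧
    (∀ t', fRaw n (rowShape s) i t = some t' →
      fRaw n (hookShape s (excess n (rowShape s) t)) i (Psi s t) = some (Psi s t')) := by
  classical
  by_cases hP : ∃ c, i ∈ t 0 c ∧ (i + 1) ∉ t 0 c
  · -- f is defined on both sides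
    obtain ⟨c1, hc1⟩ := hP
    set cs := Nat.findGreatest (fun c => i ∈ t 0 c ∧ (i + 1) ∉ t 0 c) s with hcs_def
    have hcsP : i ∈ t 0 cs ∧ (i + 1) ∉ t 0 cs := by
      rw [hcs_def]
      exact Nat.findGreatest_spec (P := fun c => i ∈ t 0 c ∧ (i + 1) ∉ t 0 c)
        (le_of_lt (mem_lt_s ht hc1.1)) hc1
    have hcsmax : ∀ c, i ∈ t 0 c → (i + 1) ∉ t 0 c → c ≤ cs := by
      intro c hc hc'
      rw [hcs_def]
      exact Nat.le_findGreatest (P := fun c => i ∈ t 0 c ∧ (i + 1) ∉ t 0 c)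
        (le_of_lt (mem_lt_s ht hc)) ⟨hc, hc'⟩
    have hcss : cs < s := mem_lt_s ht hcsP.1
    have hfb_t : fBoxCol n (rowShape s 0) t i cs := by
      constructor
      · exact (plusCol_row ht hn).mpr ⟨hcss, hcsP.1, hcsP.2⟩
      · intro c' hc'
        obtain ⟨_, h1, h2⟩ := (plusCol_row ht hn).mp hc'
        exact hcsmax c' h1 h2
    have huniq_t : ∀ r, r < n → i ∈ t r cs → r = 0 := by
      intro r hr hmem
      by_contra h
      rw [row_empty ht h] at hmem
      exact absurd hmem (Finset.notMem_empty i)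
    have hmcs_le : minE (t 0 cs) ≤ i := minE_le hcsP.1
    by_cases hB : i ∈ t 0 (cs + 1)
    · -- CASE II: the box to the right contains i (and therefore i+1)
      set d := cs + 1 with hd_def
      have hds : d < s := mem_lt_s ht hB
      have hi1d : (i + 1) ∈ t 0 d := by
        by_contra hcon
        have := hcsmax d hB hcon
        omega
      have hmd : minE (t 0 d) = i :=
        minE_eq hB (fun y hy => row_sorted ht (by omega) hcsP.1 hy)
      have hft : fRaw n (rowShape s) i t = some (updateBox (updateBox t 0 (cs + 1)
          ((t 0 (cs + 1)).erase i)) 0 cs (insert (i + 1) (t 0 cs))) :=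
        fRaw_eq_some_double hfb_t hn hcsP.1 huniq_t hB
      set tN := updateBox (updateBox t 0 (cs + 1) ((t 0 (cs + 1)).erase i)) 0 cs
        (insert (i + 1) (t 0 cs)) with htN_def
      -- evaluate the boxes of tN
      have htN_cs : tN 0 cs = insert (i + 1) (t 0 cs) := updateBox_same _ _ _ _
      have htN_d : tN 0 d = (t 0 d).erase i := by
        rw [htN_def, updateBox_other _ _ _ _ (by omega), hd_def, updateBox_same]
      have htN_oth : ∀ r c, ¬(r = 0 ∧ c = cs) → ¬(r = 0 ∧ c = d) → tN r c = t r c := by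
        intro r c h1 h2
        rw [htN_def, updateBox_other _ _ _ _ h1, updateBox_other _ _ _ _ (by tauto)]
      have hmN_cs : minE (tN 0 cs) = minE (t 0 cs) := by
        rw [htN_cs]
        apply minE_eq (Finset.mem_insert_of_mem (min_mem_box ht hcss))
        intro y hy
        rcases Finset.mem_insert.mp hy with rfl | hy'
        · omega
        · exact minE_le hy'
      have hmN_d : minE (tN 0 d) = i + 1 := by
        rw [htN_d]
        apply minE_eq (Finset.mem_erase.mpr ⟨by omega, hi1d⟩)
        intro y hy
        obtain ⟨hy1, hy2⟩ := Finset.mem_erase.mp hy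
        have := minE_le hy2
        omega
      -- the excess entries are unchanged
      have hE' : Eset s tN = Eset s t := by
        ext x
        rw [mem_Eset, mem_Eset]
        constructor
        · rintro ⟨c, hc, hm, hne⟩
          by_cases hcc : c = cs
          · subst hcc
            rw [htN_cs] at hm
            rw [hmN_cs] at hne
            rcases Finset.mem_insert.mp hm with rfl | hm'
            · exact ⟨d, hds, hi1d, by omega⟩
            · exact ⟨cs, hcss, hm', hne⟩
          · by_cases hcd : c = d
            · subst hcd
              rw [htN_d] at hm
              rw [hmN_d] at hne
              obtain ⟨hx1, hx2⟩ := Finset.mem_erase.mp hm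
              refine ⟨d, hds, hx2, by rw [hmd]; exact hx1⟩
            · rw [htN_oth 0 c (by tauto) (by tauto)] at hm hne
              exact ⟨c, hc, hm, hne⟩
        · rintro ⟨c, hc, hm, hne⟩
          by_cases hcc : c = cs
          · subst hcc
            refine ⟨cs, hcss, ?_, ?_⟩
            · rw [htN_cs]; exact Finset.mem_insert_of_mem hm
            · rw [hmN_cs]; exact hne
          · by_cases hcd : c = d
            · subst hcd
              rw [hmd] at hne
              by_cases hxi1 : x = i + 1
              · subst hxi1
                refine ⟨cs, hcss, ?_, ?_⟩
                · rw [htN_cs]; exact Finset.mem_insert_self _ _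
                · rw [hmN_cs]; omega
              · refine ⟨d, hds, ?_, ?_⟩
                · rw [htN_d]; exact Finset.mem_erase.mpr ⟨by omega, hm⟩
                · rw [hmN_d]; omega
            · rw [← htN_oth 0 c (by tauto) (by tauto)] at hm hne
              exact ⟨c, hc, hm, hne⟩
      have hrest : uncrowdRest s tN = uncrowdRest s t := by
        rw [uncrowdRest_def, uncrowdRest_def, hE']
      -- Psi side: fBox is column d, row 0
      have hplus_d : PlusCol n s (Psi s t) i d := by
        refine ⟨hds, colSign_true_iff.mpr ⟨(colHas_psi_pos ht hn (by omega)).mpr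
          ⟨hds, hmd.symm⟩, ?_⟩, ?_⟩
        · intro hcon
          obtain ⟨_, hcon2⟩ := (colHas_psi_pos ht hn (by omega)).mp hcon
          omega
        · -- mctr
          show mctr ((List.range d).filterMap (colSign n (Psi s t) i)) = 0
          have hmid : ∀ j, 0 < j → j < d → ¬ colHas n (Psi s t) (i + 1) j := by
            intro j hj0 hjd hcon
            obtain ⟨_, hcon2⟩ := (colHas_psi_pos ht hn (by omega)).mp hcon
            have hi1j : (i + 1) ∈ t 0 j := hcon2 ▸ min_mem_box ht (by omega)
            have := row_sorted ht hjd hi1j hB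
            omega
          by_cases hcol0 : colHas n (Psi s t) i 0
          · apply mctr_before_zero
            intro j hj hconf
            obtain ⟨hh1, hh2⟩ := colSign_false_iff.mp hconf
            rcases Nat.eq_zero_or_pos j with rfl | hj0
            · exact hh2 hcol0
            · exact hmid j hj0 hj hh1
          · have h0mE : ¬ (i = minE (t 0 0) ∨ i ∈ Eset s t) :=
              fun h => hcol0 ((colHas_psi_zero ht hn hs).mpr h)
            by_cases hf0 : colSign n (Psi s t) i 0 = some false
            · -- structured word: minus at 0, then pluses from the first i-box up to d
              have hiex : ∃ c, i ∈ t 0 c := ⟨cs, hcsP.1⟩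
              set a := Nat.find hiex with ha_def
              have ha_mem : i ∈ t 0 a := Nat.find_spec hiex
              have ha_minimal : ∀ j, j < a → i ∉ t 0 j := fun j hj => Nat.find_min hiex hj
              have ha_le : a ≤ cs := Nat.find_min' hiex hcsP.1
              have hma : minE (t 0 a) = i := by
                by_contra h
                exact h0mE (Or.inr (mem_Eset.mpr ⟨a, mem_lt_s ht ha_mem, ha_mem,
                  fun hh => h hh.symm⟩))
              have ha1 : 1 ≤ a := by
                by_contra h
                have ha0 : a = 0 := by omega
                exact h0mE (Or.inl (by rw [ha0] at hma; exact hma.symm))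
              apply mctr_word_struct (a := a) ha1 (by omega) hf0
              · intro j hj0 hja
                apply colSign_none_of
                · intro hcon
                  obtain ⟨_, hcon2⟩ := (colHas_psi_pos ht hn (by omega)).mp hcon
                  exact ha_minimal j (by omega) (hcon2 ▸ min_mem_box ht (by omega))
                · exact hmid j hj0 (by omega)
              · intro j hja hjd
                apply colSign_true_iff.mpr
                have hij : i ∈ t 0 j := mem_interval ht ha_mem hB hja (by omega)
                have hmj : minE (t 0 j) = i := by
                  rcases Nat.eq_or_lt_of_le hja with h | h
                  · rw [← h, hma]
                  · exact minE_eq hij (fun y hy => row_sorted ht h ha_mem hy)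
                refine ⟨(colHas_psi_pos ht hn (by omega)).mpr ⟨by omega, hmj.symm⟩, ?_⟩
                intro hcon
                obtain ⟨_, hcon2⟩ := (colHas_psi_pos ht hn (by omega)).mp hcon
                omega
            · apply mctr_before_zero
              intro j hj hconf
              rcases Nat.eq_zero_or_pos j with rfl | hj0
              · exact hf0 hconf
              · exact hmid j hj0 hj (colSign_false_iff.mp hconf).1
      have hfb_psi : fBoxCol n (hookShape s (excess n (rowShape s) t) 0) (Psi s t) i d := by
        refine ⟨hplus_d, ?_⟩
        intro c' hc'
        have hc'' : PlusCol n s (Psi s t) i c' := hc'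
        obtain ⟨hc's, hsign, _⟩ := hc''
        obtain ⟨hhas, _⟩ := colSign_true_iff.mp hsign
        rcases Nat.eq_zero_or_pos c' with rfl | hc'1
        · omega
        · obtain ⟨_, hmc'⟩ := (colHas_psi_pos ht hn (by omega)).mp hhas
          by_contra hcon
          have hic' : i ∈ t 0 c' := hmc' ▸ min_mem_box ht (by omega)
          have := row_sorted ht (by omega : d < c') hi1d hic'
          omega
      have hrow_psi : i ∈ Psi s t 0 d := by
        rw [psi_row0 hds, hmd]
        exact Finset.mem_singleton_self i
      have huniq_psi : ∀ r, r < n → i ∈ Psi s t r d → r = 0 := by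
        intro r _ hmem
        rcases mem_psi_iff.mp hmem with ⟨h, _, _⟩ | ⟨h, _, _, _⟩
        · exact h
        · omega
      have hnr_psi : i ∉ Psi s t 0 (d + 1) := by
        by_cases hd1 : d + 1 < s
        · rw [psi_row0 hd1]
          intro hcon
          have : i ∈ t 0 (d + 1) := (Finset.mem_singleton.mp hcon) ▸ min_mem_box ht hd1
          have := row_sorted ht (by omega : d < d + 1) hi1d this
          omega
        · rw [psi_empty (by omega) (by omega)]
          exact Finset.notMem_empty i
      have hfp := fRaw_eq_some_single (lam := hookShape s (excess n (rowShape s) t))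
        hfb_psi hn hrow_psi huniq_psi hnr_psi
      have hbox_simp : insert (i + 1) ((Psi s t 0 d).erase i) = {i + 1} := by
        rw [psi_row0 hds, hmd, Finset.erase_singleton]
        rfl
      rw [hbox_simp] at hfp
      have hpsieq : Psi s tN = updateBox (Psi s t) 0 d {i + 1} := by
        apply psi_eq_update_row0 hds ?_ hmN_d hrest
        intro c hc hcd
        by_cases hcc : c = cs
        · subst hcc; exact hmN_cs
        · rw [htN_oth 0 c (by tauto) (by tauto)]
      constructor
      · rw [hft, hfp]
        simp
      · intro t' h
        rw [hft] at h
        obtain rfl := Option.some.inj h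
        rw [hfp, hpsieq]
    · -- CASE I: no i in the box to the right
      have hi1E : (i + 1) ∉ Eset s t := by
        intro hcon
        obtain ⟨c0, hc0, hmem, hne⟩ := mem_Eset.mp hcon
        rcases Nat.lt_trichotomy c0 cs with hh | hh | hh
        · have := row_sorted ht hh hmem hcsP.1
          omega
        · subst hh; exact hcsP.2 hmem
        · have h1 : minE (t 0 c0) < i + 1 := lt_of_le_of_ne (minE_le hmem) (Ne.symm hne)
          have h2 : i ≤ minE (t 0 c0) := row_sorted ht hh hcsP.1 (min_mem_box ht hc0)
          have h3 : minE (t 0 c0) = i := by omega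
          have h4 : i ∈ t 0 c0 := h3 ▸ min_mem_box ht hc0
          exact hB (mem_interval ht hcsP.1 h4 (by omega) (by omega))
      have hnoplusafter : ∀ c', i ∈ t 0 c' → c' ≤ cs := by
        intro c' hc'
        by_contra hcon
        exact hB (mem_interval ht hcsP.1 hc' (by omega) (by omega))
      have hft : fRaw n (rowShape s) i t =
          some (updateBox t 0 cs (insert (i + 1) ((t 0 cs).erase i))) :=
        fRaw_eq_some_single hfb_t hn hcsP.1 huniq_t hB
      set tN := updateBox t 0 cs (insert (i + 1) ((t 0 cs).erase i)) with htN_def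
      have htN_cs : tN 0 cs = insert (i + 1) ((t 0 cs).erase i) := updateBox_same _ _ _ _
      have htN_oth : ∀ r c, ¬(r = 0 ∧ c = cs) → tN r c = t r c := by
        intro r c h1
        rw [htN_def, updateBox_other _ _ _ _ h1]
      by_cases hα : minE (t 0 cs) = i
      · -- CASE I-a : i is the minimum of its rightmost box
        have hmN_cs : minE (tN 0 cs) = i + 1 := by
          rw [htN_cs]
          apply minE_eq (Finset.mem_insert_self _ _)
          intro y hy
          rcases Finset.mem_insert.mp hy with rfl | hy'
          · omega
          · obtain ⟨hy1, hy2⟩ := Finset.mem_erase.mp hy'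
            have := minE_le hy2
            omega
        have hE' : Eset s tN = Eset s t := by
          apply Eset_congr
          intro c hc
          by_cases hcc : c = cs
          · subst hcc
            rw [hmN_cs, htN_cs, hα]
            rw [Finset.erase_insert (by
              intro hcon
              exact hcsP.2 (Finset.mem_erase.mp hcon).2)]
          · rw [htN_oth 0 c (by tauto)]
        have hrest : uncrowdRest s tN = uncrowdRest s t := by
          rw [uncrowdRest_def, uncrowdRest_def, hE']
        have hcol0_noi1 : ¬ colHas n (Psi s t) (i + 1) 0 := by
          intro hcon
          rcases (colHas_psi_zero ht hn hs).mp hcon with h | h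
          · have := min_mono ht (Nat.zero_le cs) hcss
            omega
          · exact hi1E h
        have hplus_cs : PlusCol n s (Psi s t) i cs := by
          refine ⟨hcss, colSign_true_iff.mpr ⟨?_, ?_⟩, ?_⟩
          · rcases Nat.eq_zero_or_pos cs with hcs0 | hcs1
            · rw [hcs0]
              exact (colHas_psi_zero ht hn hs).mpr (Or.inl (by rw [hcs0] at hα; exact hα.symm))
            · exact (colHas_psi_pos ht hn hcs1).mpr ⟨hcss, hα.symm⟩
          · intro hcon
            rcases Nat.eq_zero_or_pos cs with hcs0 | hcs1
            · rw [hcs0] at hcon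
              exact hcol0_noi1 hcon
            · obtain ⟨_, h2⟩ := (colHas_psi_pos ht hn hcs1).mp hcon
              omega
          · show mctr ((List.range cs).filterMap (colSign n (Psi s t) i)) = 0
            apply mctr_before_zero
            intro j hj hconf
            obtain ⟨hh1, _⟩ := colSign_false_iff.mp hconf
            rcases Nat.eq_zero_or_pos j with rfl | hj0
            · exact hcol0_noi1 hh1
            · obtain ⟨_, h2⟩ := (colHas_psi_pos ht hn hj0).mp hh1
              have : (i + 1) ∈ t 0 j := h2 ▸ min_mem_box ht (by omega)
              have := row_sorted ht hj this hcsP.1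
              omega
        have hfb_psi : fBoxCol n (hookShape s (excess n (rowShape s) t) 0) (Psi s t) i cs := by
          refine ⟨hplus_cs, ?_⟩
          intro c' hc'
          have hc'' : PlusCol n s (Psi s t) i c' := hc'
          obtain ⟨hc's, hsign, _⟩ := hc''
          obtain ⟨hhas, _⟩ := colSign_true_iff.mp hsign
          rcases Nat.eq_zero_or_pos c' with rfl | hc'1
          · omega
          · obtain ⟨_, hmc'⟩ := (colHas_psi_pos ht hn (by omega)).mp hhas
            exact hnoplusafter c' (hmc' ▸ min_mem_box ht (by omega))
        have hrow_psi : i ∈ Psi s t 0 cs := by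
          rw [psi_row0 hcss, hα]
          exact Finset.mem_singleton_self i
        have huniq_psi : ∀ r, r < n → i ∈ Psi s t r cs → r = 0 := by
          intro r _ hmem
          rcases mem_psi_iff.mp hmem with ⟨h, _, _⟩ | ⟨hc0, hr1, hr2, hx⟩
          · exact h
          · exfalso
            have hiE : i ∈ Eset s t := hx ▸ L_getD_mem (by omega)
            obtain ⟨c0, hc0', hmem', hne'⟩ := mem_Eset.mp hiE
            have hle := hnoplusafter c0 hmem'
            rcases Nat.eq_or_lt_of_le hle with h | h
            · rw [h] at hne'
              exact hne' hα.symm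
            · omega
        have hnr_psi : i ∉ Psi s t 0 (cs + 1) := by
          by_cases hd1 : cs + 1 < s
          · rw [psi_row0 hd1]
            intro hcon
            exact hB ((Finset.mem_singleton.mp hcon) ▸ min_mem_box ht hd1)
          · rw [psi_empty (by omega) (by omega)]
            exact Finset.notMem_empty i
        have hfp := fRaw_eq_some_single (lam := hookShape s (excess n (rowShape s) t))
          hfb_psi hn hrow_psi huniq_psi hnr_psi
        have hbox_simp : insert (i + 1) ((Psi s t 0 cs).erase i) = {i + 1} := by
          rw [psi_row0 hcss, hα, Finset.erase_singleton]
          rfl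
        rw [hbox_simp] at hfp
        have hpsieq : Psi s tN = updateBox (Psi s t) 0 cs {i + 1} := by
          apply psi_eq_update_row0 hcss ?_ hmN_cs hrest
          intro c hc hcd
          rw [htN_oth 0 c (by tauto)]
        constructor
        · rw [hft, hfp]
          simp
        · intro t' h
          rw [hft] at h
          obtain rfl := Option.some.inj h
          rw [hfp, hpsieq]
      · -- CASE I-b : i is an excess entry ; f acts on the leg of the hook
        have hmcs_lt : minE (t 0 cs) < i := by
          have := minE_le hcsP.1
          omega
        have hiE : i ∈ Eset s t := mem_Eset.mpr ⟨cs, hcss, hcsP.1, fun h => hα h.symm⟩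
        have hcs_unique : ∀ c, i ∈ t 0 c → c = cs := by
          intro c hc
          have hle := hnoplusafter c hc
          rcases Nat.eq_or_lt_of_le hle with h | h
          · exact h
          · exfalso
            have h1 : i ≤ minE (t 0 cs) := row_sorted ht h hc (min_mem_box ht hcss)
            omega
        have hmN_cs : minE (tN 0 cs) = minE (t 0 cs) := by
          rw [htN_cs]
          apply minE_eq
          · apply Finset.mem_insert_of_mem
            exact Finset.mem_erase.mpr ⟨by omega, min_mem_box ht hcss⟩
          · intro y hy
            rcases Finset.mem_insert.mp hy with rfl | hy'
            · omega
            · exact minE_le (Finset.mem_erase.mp hy').2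
        have hE' : Eset s tN = insert (i + 1) ((Eset s t).erase i) := by
          ext x
          rw [mem_Eset]
          simp only [Finset.mem_insert, Finset.mem_erase]
          constructor
          · rintro ⟨c, hc, hm, hne⟩
            by_cases hcc : c = cs
            · subst hcc
              rw [htN_cs] at hm
              rw [hmN_cs] at hne
              rcases Finset.mem_insert.mp hm with rfl | hm'
              · exact Or.inl rfl
              · obtain ⟨hx1, hx2⟩ := Finset.mem_erase.mp hm'
                exact Or.inr ⟨hx1, mem_Eset.mpr ⟨cs, hcss, hx2, hne⟩⟩
            · rw [htN_oth 0 c (by tauto)] at hm hne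
              refine Or.inr ⟨?_, mem_Eset.mpr ⟨c, hc, hm, hne⟩⟩
              intro hcon
              subst hcon
              exact hcc (hcs_unique c hm)
          · rintro (rfl | ⟨hxi, hxE⟩)
            · refine ⟨cs, hcss, ?_, ?_⟩
              · rw [htN_cs]; exact Finset.mem_insert_self _ _
              · rw [hmN_cs]; omega
            · obtain ⟨c, hc, hm, hne⟩ := mem_Eset.mp hxE
              by_cases hcc : c = cs
              · subst hcc
                refine ⟨cs, hcss, ?_, ?_⟩
                · rw [htN_cs]
                  exact Finset.mem_insert_of_mem (Finset.mem_erase.mpr ⟨hxi, hm⟩)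
                · rw [hmN_cs]; exact hne
              · refine ⟨c, hc, ?_, ?_⟩
                · rw [htN_oth 0 c (by tauto)]; exact hm
                · rw [htN_oth 0 c (by tauto)]; exact hne
        have hi1E' : (i + 1) ∉ Eset s t := hi1E
        have hrest : uncrowdRest s tN =
            (uncrowdRest s t).map (fun z => if z = i then i + 1 else z) := by
          rw [uncrowdRest_def, uncrowdRest_def, hE']
          apply sort_insert_erase hiE hi1E'
          intro z hz hzi
          have hzne : z ≠ i + 1 := fun h => hi1E' (h ▸ hz)
          constructor
          · omega
          · omega
        obtain ⟨k, hk, hgetk⟩ := exists_idx_of_mem_E hiE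
        have hkn : k + 1 < n := by
          have := Eset_card_lt ht hn
          have := L_length (s := s) (t := t)
          omega
        have hrow_psi : i ∈ Psi s t (k + 1) 0 :=
          mem_psi_iff.mpr (Or.inr ⟨rfl, by omega, by omega, by simpa using hgetk.symm⟩)
        have hplus_0 : PlusCol n s (Psi s t) i 0 := by
          refine ⟨by omega, colSign_true_iff.mpr ⟨?_, ?_⟩, ?_⟩
          · exact (colHas_psi_zero ht hn hs).mpr (Or.inr hiE)
          · intro hcon
            rcases (colHas_psi_zero ht hn hs).mp hcon with h | h
            · have h1 := min_mono ht (Nat.zero_le cs) hcss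
              omega
            · exact hi1E h
          · show mctr ((List.range 0).filterMap (colSign n (Psi s t) i)) = 0
            rfl
        have hfb_psi : fBoxCol n (hookShape s (excess n (rowShape s) t) 0) (Psi s t) i 0 := by
          refine ⟨hplus_0, ?_⟩
          intro c' hc'
          have hc'' : PlusCol n s (Psi s t) i c' := hc'
          obtain ⟨hc's, hsign, _⟩ := hc''
          obtain ⟨hhas, _⟩ := colSign_true_iff.mp hsign
          rcases Nat.eq_zero_or_pos c' with rfl | hc'1
          · omega
          · exfalso
            obtain ⟨_, hmc'⟩ := (colHas_psi_pos ht hn (by omega)).mp hhas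
            have hic' : i ∈ t 0 c' := hmc' ▸ min_mem_box ht (by omega)
            have := hcs_unique c' hic'
            subst this
            exact hα hmc'.symm
        have huniq_psi : ∀ r, r < n → i ∈ Psi s t r 0 → r = k + 1 := by
          intro r _ hmem
          exact psi_col0_row_unique ht hmem hrow_psi
        have hnr_psi : i ∉ Psi s t (k + 1) 1 := by
          rw [psi_empty (by omega) (by omega)]
          exact Finset.notMem_empty i
        have hfp := fRaw_eq_some_single (lam := hookShape s (excess n (rowShape s) t))
          (c₀ := 0) (r₀ := k + 1) hfb_psi hkn hrow_psi huniq_psi (by simpa using hnr_psi)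
        have hbox_simp : insert (i + 1) ((Psi s t (k + 1) 0).erase i) = {i + 1} := by
          rw [psi_leg (by omega) (by omega)]
          simp only [Nat.add_sub_cancel]
          rw [hgetk, Finset.erase_singleton]
          rfl
        rw [hbox_simp] at hfp
        have hpsieq : Psi s tN = updateBox (Psi s t) (k + 1) 0 {i + 1} := by
          apply psi_eq_update_leg ?_ hk hrest hgetk
          intro c hc
          by_cases hcc : c = cs
          · subst hcc; exact hmN_cs
          · rw [htN_oth 0 c (by tauto)]
        constructor
        · rw [hft, hfp]
          simp
        · intro t' h
          rw [hft] at h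
          obtain rfl := Option.some.inj h
          rw [hfp, hpsieq]
  · -- f is zero on both sides
    have htnone : fRaw n (rowShape s) i t = none := by
      apply fRaw_eq_none_iff.mpr
      intro c hc
      obtain ⟨_, h1, h2⟩ := (plusCol_row ht hn).mp hc
      exact hP ⟨c, h1, h2⟩
    have hpnone : fRaw n (hookShape s (excess n (rowShape s) t)) i (Psi s t) = none := by
      apply fRaw_eq_none_iff.mpr
      intro c hc
      have hc' : PlusCol n s (Psi s t) i c := hc
      obtain ⟨hcs, hsign, hmctr⟩ := hc'
      obtain ⟨hhi, hhi1⟩ := colSign_true_iff.mp hsign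
      rcases Nat.eq_zero_or_pos c with rfl | hc1
      · have hex : ∃ c0, i ∈ t 0 c0 := by
          rcases (colHas_psi_zero ht hn hs).mp hhi with h | h
          · exact ⟨0, h ▸ min_mem_box ht hs⟩
          · obtain ⟨c0, hc0, hmem, _⟩ := mem_Eset.mp h
            exact ⟨c0, hmem⟩
        obtain ⟨c0, hic0⟩ := hex
        have hi1c0 : (i + 1) ∈ t 0 c0 := by
          by_contra hcon
          exact hP ⟨c0, hic0, hcon⟩
        apply hhi1
        apply (colHas_psi_zero ht hn hs).mpr
        right
        refine mem_Eset.mpr ⟨c0, mem_lt_s ht hi1c0, hi1c0, ?_⟩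
        have := minE_le hic0
        omega
      · obtain ⟨hcs', hmi⟩ := (colHas_psi_pos ht hn hc1).mp hhi
        have hic : i ∈ t 0 c := hmi ▸ min_mem_box ht hcs'
        have hi1c : (i + 1) ∈ t 0 c := by
          by_contra hcon
          exact hP ⟨c, hic, hcon⟩
        have hf0 : colSign n (Psi s t) i 0 = some false := by
          apply colSign_false_iff.mpr
          constructor
          · apply (colHas_psi_zero ht hn hs).mpr
            right
            refine mem_Eset.mpr ⟨c, hcs', hi1c, ?_⟩
            have := minE_le hic
            omega
          · intro hcon
            rcases (colHas_psi_zero ht hn hs).mp hcon with h | h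
            · have hib0 : i ∈ t 0 0 := h ▸ min_mem_box ht hs
              have hi1b0 : (i + 1) ∈ t 0 0 := by
                by_contra hcon2
                exact hP ⟨0, hib0, hcon2⟩
              have := row_sorted ht hc1 hi1b0 hic
              omega
            · obtain ⟨c0, hc0, hmem, hne⟩ := mem_Eset.mp h
              rcases Nat.lt_trichotomy c0 c with hh | hh | hh
              · have hi1c0 : (i + 1) ∈ t 0 c0 := by
                  by_contra hcon2
                  exact hP ⟨c0, hmem, hcon2⟩
                have := row_sorted ht hh hi1c0 hic
                omega
              · subst hh
                exact hne hmi
              · have h1 : minE (t 0 c0) < i := lt_of_le_of_ne (minE_le hmem) (Ne.symm hne)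
                have h2 : i ≤ minE (t 0 c0) := row_sorted ht hh hic (min_mem_box ht hc0)
                omega
        have hnone_mid : ∀ j, 0 < j → j < c → colSign n (Psi s t) i j = none := by
          intro j hj0 hjc
          apply colSign_none_of
          · intro hcon
            obtain ⟨_, h2⟩ := (colHas_psi_pos ht hn hj0).mp hcon
            have hij : i ∈ t 0 j := h2 ▸ min_mem_box ht (by omega)
            have hi1j : (i + 1) ∈ t 0 j := by
              by_contra hcon2
              exact hP ⟨j, hij, hcon2⟩
            have := row_sorted ht hjc hi1j hic
            omega
          · intro hcon
            obtain ⟨_, h2⟩ := (colHas_psi_pos ht hn hj0).mp hcon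
            have hi1j : (i + 1) ∈ t 0 j := h2 ▸ min_mem_box ht (by omega)
            have := row_sorted ht hjc hi1j hic
            omega
        have : mctr (colWordBefore n (Psi s t) i c) = 1 := by
          show mctr ((List.range c).filterMap (colSign n (Psi s t) i)) = 1
          rw [filterMap_range_single hc1 hf0 (fun j hj hj0 => hnone_mid j (by omega) hj)]
          exact mctr_singleton_false
        have hmctr' : mctr (colWordBefore n (Psi s t) i c) = 0 := hmctr
        omega
    rw [htnone, hpnone]
    constructor
    · constructor <;> intro <;> rfl
    · intro t' h
      exact absurd h (by simp)

end Conj5F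
section Conj5E

variable {n s i : ℕ} {t : Filling}

theorem e_commute (ht : IsSVT n (rowShape s) t) (hn : 1 ≤ n) (hs : 1 ≤ s) :
    (eRaw n (rowShape s) i t = none ↔
      eRaw n (hookShape s (excess n (rowShape s) t)) i (Psi s t) = none) ∧
    (∀ t', eRaw n (rowShape s) i t = some t' →
      eRaw n (hookShape s (excess n (rowShape s) t)) i (Psi s t) = some (Psi s t')) := by
  classical
  by_cases hM : ∃ c, (i + 1) ∈ t 0 c ∧ i ∉ t 0 c
  · -- e is defined on both sides
    set cm := Nat.find hM with hcm_def
    have hQm : (i + 1) ∈ t 0 cm ∧ i ∉ t 0 cm := Nat.find_spec hM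
    have hQmin : ∀ j, j < cm → ¬ ((i + 1) ∈ t 0 j ∧ i ∉ t 0 j) :=
      fun j hj => Nat.find_min hM hj
    have hcms : cm < s := mem_lt_s ht hQm.1
    have heb_t : eBoxCol n (rowShape s 0) t i cm := by
      constructor
      · exact (minusCol_row ht hn).mpr ⟨hcms, hQm.1, hQm.2⟩
      · intro c' hc'
        obtain ⟨_, h1, h2⟩ := (minusCol_row ht hn).mp hc'
        by_contra hcon
        exact hQmin c' (by omega) ⟨h1, h2⟩
    have huniq_t : ∀ r, r < n → (i + 1) ∈ t r cm → r = 0 := by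
      intro r hr hmem
      by_contra h
      rw [row_empty ht h] at hmem
      exact absurd hmem (Finset.notMem_empty _)
    by_cases hL : 0 < cm ∧ (i + 1) ∈ t 0 (cm - 1)
    · -- CASE E-II: the box to the left also contains i+1 (and therefore i)
      set b := cm - 1 with hb_def
      have hbcm : b < cm := by omega
      have hbs : b < s := by omega
      have hib : i ∈ t 0 b := by
        by_contra hcon
        exact hQmin b hbcm ⟨hL.2, hcon⟩
      have hmb_le : minE (t 0 b) ≤ i := minE_le hib
      have hmcm : minE (t 0 cm) = i + 1 :=
        minE_eq hQm.1 (fun y hy => row_sorted ht hbcm hL.2 hy)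
      have het : eRaw n (rowShape s) i t = some (updateBox (updateBox t 0 (cm - 1)
          ((t 0 (cm - 1)).erase (i + 1))) 0 cm (insert i (t 0 cm))) :=
        eRaw_eq_some_double heb_t hn hQm.1 huniq_t hL
      set tN := updateBox (updateBox t 0 (cm - 1) ((t 0 (cm - 1)).erase (i + 1))) 0 cm
        (insert i (t 0 cm)) with htN_def
      have htN_cm : tN 0 cm = insert i (t 0 cm) := updateBox_same _ _ _ _
      have htN_b : tN 0 b = (t 0 b).erase (i + 1) := by
        rw [htN_def, updateBox_other _ _ _ _ (by omega), hb_def, updateBox_same]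
      have htN_oth : ∀ r c, ¬(r = 0 ∧ c = cm) → ¬(r = 0 ∧ c = b) → tN r c = t r c := by
        intro r c h1 h2
        rw [htN_def, updateBox_other _ _ _ _ h1, updateBox_other _ _ _ _ (by tauto)]
      have hmN_cm : minE (tN 0 cm) = i := by
        rw [htN_cm]
        apply minE_eq (Finset.mem_insert_self _ _)
        intro y hy
        rcases Finset.mem_insert.mp hy with rfl | hy'
        · omega
        · have := minE_le hy'
          omega
      have hmN_b : minE (tN 0 b) = minE (t 0 b) := by
        rw [htN_b]
        apply minE_eq (Finset.mem_erase.mpr ⟨by omega, min_mem_box ht hbs⟩)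
        intro y hy
        exact minE_le (Finset.mem_erase.mp hy).2
      have hE' : Eset s tN = Eset s t := by
        ext x
        rw [mem_Eset, mem_Eset]
        constructor
        · rintro ⟨c, hc, hm, hne⟩
          by_cases hcc : c = cm
          · subst hcc
            rw [htN_cm] at hm
            rw [hmN_cm] at hne
            rcases Finset.mem_insert.mp hm with rfl | hm'
            · exact absurd rfl hne
            · by_cases hxi1 : x = i + 1
              · subst hxi1
                exact ⟨b, hbs, hL.2, by omega⟩
              · exact ⟨cm, hcms, hm', by rw [hmcm]; exact hxi1⟩
          · by_cases hcb : c = b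
            · subst hcb
              rw [htN_b] at hm
              rw [hmN_b] at hne
              obtain ⟨hx1, hx2⟩ := Finset.mem_erase.mp hm
              exact ⟨b, hbs, hx2, hne⟩
            · rw [htN_oth 0 c (by tauto) (by tauto)] at hm hne
              exact ⟨c, hc, hm, hne⟩
        · rintro ⟨c, hc, hm, hne⟩
          by_cases hcc : c = cm
          · subst hcc
            rw [hmcm] at hne
            refine ⟨cm, hcms, ?_, ?_⟩
            · rw [htN_cm]; exact Finset.mem_insert_of_mem hm
            · rw [hmN_cm]
              have := minE_le hm
              rw [hmcm] at this
              omega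
          · by_cases hcb : c = b
            · subst hcb
              by_cases hxi1 : x = i + 1
              · subst hxi1
                refine ⟨cm, hcms, ?_, ?_⟩
                · rw [htN_cm]; exact Finset.mem_insert_of_mem hQm.1
                · rw [hmN_cm]; omega
              · refine ⟨b, hbs, ?_, ?_⟩
                · rw [htN_b]; exact Finset.mem_erase.mpr ⟨hxi1, hm⟩
                · rw [hmN_b]; exact hne
            · rw [← htN_oth 0 c (by tauto) (by tauto)] at hm hne
              exact ⟨c, hc, hm, hne⟩
      have hrest : uncrowdRest s tN = uncrowdRest s t := by
        rw [uncrowdRest_def, uncrowdRest_def, hE']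
      -- the auxiliary fact used twice: column 0 of Psi is not an uncanceled minus
      have hnotminus0 : ¬ MinusCol n s (Psi s t) i 0 := by
        rintro ⟨_, hsign0, hpctr0⟩
        obtain ⟨hhas0, hnhas0⟩ := colSign_false_iff.mp hsign0
        -- i is not in column 0, so i is the min of its first box a ≥ 1
        have hiA : ¬ (i = minE (t 0 0) ∨ i ∈ Eset s t) :=
          fun h => hnhas0 ((colHas_psi_zero ht hn hs).mpr h)
        have hiex : ∃ c, i ∈ t 0 c := ⟨b, hib⟩
        set a := Nat.find hiex with ha_def
        have ha_mem : i ∈ t 0 a := Nat.find_spec hiex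
        have ha_minimal : ∀ j, j < a → i ∉ t 0 j := fun j hj => Nat.find_min hiex hj
        have ha_le : a ≤ b := Nat.find_min' hiex hib
        have hma : minE (t 0 a) = i := by
          by_contra h
          exact hiA (Or.inr (mem_Eset.mpr ⟨a, mem_lt_s ht ha_mem, ha_mem, fun hh => h hh.symm⟩))
        have ha1 : 1 ≤ a := by
          by_contra h
          have ha0 : a = 0 := by omega
          exact hiA (Or.inl (by rw [ha0] at hma; exact hma.symm))
        have hword : pctr (((List.range s).drop (0 + 1)).filterMap
            (colSign n (Psi s t) i)) ≠ 0 := by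
          apply pctr_after_ne (k := a) (by omega) (by omega)
          · intro j hj0 hja
            apply colSign_none_of
            · intro hcon
              obtain ⟨_, h2⟩ := (colHas_psi_pos ht hn (by omega)).mp hcon
              exact ha_minimal j (by omega) (h2 ▸ min_mem_box ht (by omega))
            · intro hcon
              obtain ⟨_, h2⟩ := (colHas_psi_pos ht hn (by omega)).mp hcon
              have h3 : (i + 1) ∈ t 0 j := h2 ▸ min_mem_box ht (by omega)
              have := row_sorted ht (by omega : j < a) h3 ha_mem
              omega
          · apply colSign_true_iff.mpr
            refine ⟨(colHas_psi_pos ht hn (by omega)).mpr ⟨by omega, hma.symm⟩, ?_⟩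
            intro hcon
            obtain ⟨_, h2⟩ := (colHas_psi_pos ht hn (by omega)).mp hcon
            omega
        exact hword hpctr0
      have hminus_cm : MinusCol n s (Psi s t) i cm := by
        refine ⟨hcms, colSign_false_iff.mpr ⟨(colHas_psi_pos ht hn (by omega)).mpr
          ⟨hcms, hmcm.symm⟩, ?_⟩, ?_⟩
        · intro hcon
          obtain ⟨_, h2⟩ := (colHas_psi_pos ht hn (by omega)).mp hcon
          omega
        · show pctr (((List.range s).drop (cm + 1)).filterMap (colSign n (Psi s t) i)) = 0
          apply pctr_after_zero
          intro j hcmj hjs hcon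
          obtain ⟨hh1, _⟩ := colSign_true_iff.mp hcon
          obtain ⟨_, h2⟩ := (colHas_psi_pos ht hn (by omega)).mp hh1
          have h3 : i ∈ t 0 j := h2 ▸ min_mem_box ht hjs
          have := row_sorted ht (by omega : b < j) hL.2 h3
          omega
      have heb_psi : eBoxCol n (hookShape s (excess n (rowShape s) t) 0) (Psi s t) i cm := by
        refine ⟨hminus_cm, ?_⟩
        intro c' hc'
        have hc'' : MinusCol n s (Psi s t) i c' := hc'
        have hccopy := hc''
        obtain ⟨hc's, hsign, _⟩ := hc''
        obtain ⟨hhas, _⟩ := colSign_false_iff.mp hsign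
        rcases Nat.eq_zero_or_pos c' with rfl | hc'1
        · exact absurd hccopy hnotminus0
        · obtain ⟨_, hmc'⟩ := (colHas_psi_pos ht hn hc'1).mp hhas
          by_contra hcon
          have hi1c' : (i + 1) ∈ t 0 c' := hmc' ▸ min_mem_box ht (by omega)
          have hic' : i ∈ t 0 c' := by
            by_contra hcon2
            exact hQmin c' (by omega) ⟨hi1c', hcon2⟩
          have := minE_le hic'
          omega
      have hrow_psi : (i + 1) ∈ Psi s t 0 cm := by
        rw [psi_row0 hcms, hmcm]
        exact Finset.mem_singleton_self _
      have huniq_psi : ∀ r, r < n → (i + 1) ∈ Psi s t r cm → r = 0 := by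
        intro r _ hmem
        rcases mem_psi_iff.mp hmem with ⟨h, _, _⟩ | ⟨h, _, _, _⟩
        · exact h
        · omega
      have hnl_psi : ¬ (0 < cm ∧ (i + 1) ∈ Psi s t 0 (cm - 1)) := by
        rintro ⟨_, hcon⟩
        rw [psi_row0 (by omega : cm - 1 < s)] at hcon
        have : i + 1 = minE (t 0 (cm - 1)) := Finset.mem_singleton.mp hcon
        have h2 := minE_le hib
        rw [← hb_def] at this
        omega
      have hep := eRaw_eq_some_single (lam := hookShape s (excess n (rowShape s) t))
        heb_psi hn hrow_psi huniq_psi hnl_psi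
      have hbox_simp : insert i ((Psi s t 0 cm).erase (i + 1)) = {i} := by
        rw [psi_row0 hcms, hmcm, Finset.erase_singleton]
        rfl
      rw [hbox_simp] at hep
      have hpsieq : Psi s tN = updateBox (Psi s t) 0 cm {i} := by
        apply psi_eq_update_row0 hcms ?_ hmN_cm hrest
        intro c hc hcd
        by_cases hcb : c = b
        · subst hcb; exact hmN_b
        · rw [htN_oth 0 c (by tauto) (by tauto)]
      constructor
      · rw [het, hep]
        simp
      · intro t' h
        rw [het] at h
        obtain rfl := Option.some.inj h
        rw [hep, hpsieq]
    · -- CASE E-I: single-box move on the t side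
      have hnb : ∀ c, (i + 1) ∈ t 0 c → cm ≤ c := by
        intro c hc
        by_contra hcon
        have hic : i ∈ t 0 c := by
          by_contra hcon2
          exact hQmin c (by omega) ⟨hc, hcon2⟩
        have hi1b : (i + 1) ∈ t 0 (cm - 1) :=
          mem_interval ht hc hQm.1 (by omega) (by omega)
        exact hL ⟨by omega, hi1b⟩
      have het : eRaw n (rowShape s) i t =
          some (updateBox t 0 cm (insert i ((t 0 cm).erase (i + 1)))) :=
        eRaw_eq_some_single heb_t hn hQm.1 huniq_t hL
      set tN := updateBox t 0 cm (insert i ((t 0 cm).erase (i + 1))) with htN_def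
      have htN_cm : tN 0 cm = insert i ((t 0 cm).erase (i + 1)) := updateBox_same _ _ _ _
      have htN_oth : ∀ r c, ¬(r = 0 ∧ c = cm) → tN r c = t r c := by
        intro r c h1
        rw [htN_def, updateBox_other _ _ _ _ h1]
      by_cases hβ : minE (t 0 cm) = i + 1
      · -- CASE E-I-a : i+1 is the minimum of its box
        have hi1E : (i + 1) ∉ Eset s t := by
          intro hcon
          obtain ⟨c0, hc0, hmem, hne⟩ := mem_Eset.mp hcon
          have hge := hnb c0 hmem
          rcases Nat.eq_or_lt_of_le hge with h | h
          · rw [h] at hβ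
            exact hne hβ.symm
          · have := min_mono ht (by omega : cm ≤ c0) hc0
            have := minE_le hmem
            omega
        have hmN_cm : minE (tN 0 cm) = i := by
          rw [htN_cm]
          apply minE_eq (Finset.mem_insert_self _ _)
          intro y hy
          rcases Finset.mem_insert.mp hy with rfl | hy'
          · omega
          · obtain ⟨hy1, hy2⟩ := Finset.mem_erase.mp hy'
            have := minE_le hy2
            omega
        have hE' : Eset s tN = Eset s t := by
          apply Eset_congr
          intro c hc
          by_cases hcc : c = cm
          · subst hcc
            rw [hmN_cm, htN_cm, hβ]
            rw [Finset.erase_insert (by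
              intro hcon
              exact hQm.2 (Finset.mem_erase.mp hcon).2)]
          · rw [htN_oth 0 c (by tauto)]
        have hrest : uncrowdRest s tN = uncrowdRest s t := by
          rw [uncrowdRest_def, uncrowdRest_def, hE']
        have hcol0has : ¬ colHas n (Psi s t) (i + 1) 0 ∨ cm = 0 := by
          rcases Nat.eq_zero_or_pos cm with h | h
          · exact Or.inr h
          · left
            intro hcon
            rcases (colHas_psi_zero ht hn hs).mp hcon with hh | hh
            · have : (i + 1) ∈ t 0 0 := hh ▸ min_mem_box ht hs
              have := hnb 0 this
              omega
            · exact hi1E hh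
        have hminus_cm : MinusCol n s (Psi s t) i cm := by
          refine ⟨hcms, colSign_false_iff.mpr ⟨?_, ?_⟩, ?_⟩
          · rcases Nat.eq_zero_or_pos cm with hcm0 | hcm1
            · rw [hcm0]
              exact (colHas_psi_zero ht hn hs).mpr (Or.inl (by rw [hcm0] at hβ; exact hβ.symm))
            · exact (colHas_psi_pos ht hn hcm1).mpr ⟨hcms, hβ.symm⟩
          · intro hcon
            rcases Nat.eq_zero_or_pos cm with hcm0 | hcm1
            · rw [hcm0] at hcon
              rcases (colHas_psi_zero ht hn hs).mp hcon with hh | hh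
              · have hb0 : minE (t 0 0) = i + 1 := by rw [hcm0] at hβ; exact hβ
                omega
              · obtain ⟨c0, hc0s, hmem, hne0⟩ := mem_Eset.mp hh
                rcases Nat.eq_zero_or_pos c0 with hc00 | hc01
                · subst hc00
                  have h1 := minE_le hmem
                  rw [hcm0] at hβ
                  omega
                · have hb0 : (i + 1) ∈ t 0 0 := by
                    rw [hcm0] at hβ
                    exact hβ ▸ min_mem_box ht hs
                  have := row_sorted ht hc01 hb0 hmem
                  omega
            · obtain ⟨_, h2⟩ := (colHas_psi_pos ht hn hcm1).mp hcon
              omega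
          · show pctr (((List.range s).drop (cm + 1)).filterMap (colSign n (Psi s t) i)) = 0
            apply pctr_after_zero
            intro j hcmj hjs hcon
            obtain ⟨hh1, _⟩ := colSign_true_iff.mp hcon
            rcases Nat.eq_zero_or_pos j with rfl | hj1
            · omega
            · obtain ⟨_, h2⟩ := (colHas_psi_pos ht hn hj1).mp hh1
              have h3 : i ∈ t 0 j := h2 ▸ min_mem_box ht hjs
              have := row_sorted ht (by omega : cm < j) hQm.1 h3
              omega
        have heb_psi : eBoxCol n (hookShape s (excess n (rowShape s) t) 0) (Psi s t) i cm := by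
          refine ⟨hminus_cm, ?_⟩
          intro c' hc'
          have hc'' : MinusCol n s (Psi s t) i c' := hc'
          obtain ⟨hc's, hsign, _⟩ := hc''
          obtain ⟨hhas, _⟩ := colSign_false_iff.mp hsign
          rcases Nat.eq_zero_or_pos c' with rfl | hc'1
          · rcases hcol0has with h | h
            · exact absurd hhas h
            · omega
          · obtain ⟨_, hmc'⟩ := (colHas_psi_pos ht hn hc'1).mp hhas
            exact hnb c' (hmc' ▸ min_mem_box ht (by omega))
        have hrow_psi : (i + 1) ∈ Psi s t 0 cm := by
          rw [psi_row0 hcms, hβ]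
          exact Finset.mem_singleton_self _
        have huniq_psi : ∀ r, r < n → (i + 1) ∈ Psi s t r cm → r = 0 := by
          intro r _ hmem
          rcases mem_psi_iff.mp hmem with ⟨h, _, _⟩ | ⟨hc0, hr1, hr2, hx⟩
          · exact h
          · exfalso
            exact hi1E (hx ▸ L_getD_mem (by omega))
        have hnl_psi : ¬ (0 < cm ∧ (i + 1) ∈ Psi s t 0 (cm - 1)) := by
          rintro ⟨hcm1, hcon⟩
          rw [psi_row0 (by omega : cm - 1 < s)] at hcon
          have h1 : i + 1 = minE (t 0 (cm - 1)) := Finset.mem_singleton.mp hcon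
          have : (i + 1) ∈ t 0 (cm - 1) := h1 ▸ min_mem_box ht (by omega)
          have := hnb _ this
          omega
        have hep := eRaw_eq_some_single (lam := hookShape s (excess n (rowShape s) t))
          heb_psi hn hrow_psi huniq_psi hnl_psi
        have hbox_simp : insert i ((Psi s t 0 cm).erase (i + 1)) = {i} := by
          rw [psi_row0 hcms, hβ, Finset.erase_singleton]
          rfl
        rw [hbox_simp] at hep
        have hpsieq : Psi s tN = updateBox (Psi s t) 0 cm {i} := by
          apply psi_eq_update_row0 hcms ?_ hmN_cm hrest
          intro c hc hcd
          rw [htN_oth 0 c (by tauto)]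
        constructor
        · rw [het, hep]
          simp
        · intro t' h
          rw [het] at h
          obtain rfl := Option.some.inj h
          rw [hep, hpsieq]
      · -- CASE E-I-b : i+1 is an excess entry; e acts on the leg of the hook
        have hmcm_lt : minE (t 0 cm) < i + 1 := by
          have := minE_le hQm.1
          omega
        have hi1E : (i + 1) ∈ Eset s t := mem_Eset.mpr ⟨cm, hcms, hQm.1, fun h => hβ h.symm⟩
        have hmcm_lt' : minE (t 0 cm) < i := by
          rcases Nat.lt_or_ge (minE (t 0 cm)) i with h | h
          · exact h
          · exfalso
            have h2 : minE (t 0 cm) = i := by omega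
            exact hQm.2 (h2 ▸ min_mem_box ht hcms)
        have hnoi : ∀ c, i ∉ t 0 c := by
          intro c hcon
          have hcls := mem_lt_s ht hcon
          rcases Nat.lt_trichotomy c cm with h | h | h
          · have := row_sorted ht h hcon (min_mem_box ht hcms)
            omega
          · subst h; exact hQm.2 hcon
          · have := row_sorted ht h hQm.1 hcon
            omega
        have hiE : i ∉ Eset s t := by
          intro hcon
          obtain ⟨c0, _, hmem, _⟩ := mem_Eset.mp hcon
          exact hnoi c0 hmem
        have hi1nm_unique : ∀ c, (i + 1) ∈ t 0 c → (i + 1) ≠ minE (t 0 c) → c = cm := by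
          intro c hmem hne
          exact nonmin_unique ht hmem hne hQm.1 (fun h => hβ h.symm)
        have hmN_cm : minE (tN 0 cm) = minE (t 0 cm) := by
          rw [htN_cm]
          apply minE_eq
          · exact Finset.mem_insert_of_mem (Finset.mem_erase.mpr ⟨by omega, min_mem_box ht hcms⟩)
          · intro y hy
            rcases Finset.mem_insert.mp hy with rfl | hy'
            · omega
            · exact minE_le (Finset.mem_erase.mp hy').2
        have hE' : Eset s tN = insert i ((Eset s t).erase (i + 1)) := by
          ext x
          rw [mem_Eset]
          simp only [Finset.mem_insert, Finset.mem_erase]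
          constructor
          · rintro ⟨c, hc, hm, hne⟩
            by_cases hcc : c = cm
            · subst hcc
              rw [htN_cm] at hm
              rw [hmN_cm] at hne
              rcases Finset.mem_insert.mp hm with rfl | hm'
              · exact Or.inl rfl
              · obtain ⟨hx1, hx2⟩ := Finset.mem_erase.mp hm'
                refine Or.inr ⟨hx1, mem_Eset.mpr ⟨cm, hcms, hx2, hne⟩⟩
            · rw [htN_oth 0 c (by tauto)] at hm hne
              refine Or.inr ⟨?_, mem_Eset.mpr ⟨c, hc, hm, hne⟩⟩
              intro hcon
              subst hcon
              exact hcc (hi1nm_unique c hm hne)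
          · rintro (rfl | ⟨hxi, hxE⟩)
            · refine ⟨cm, hcms, ?_, ?_⟩
              · rw [htN_cm]; exact Finset.mem_insert_self _ _
              · rw [hmN_cm]; omega
            · obtain ⟨c, hc, hm, hne⟩ := mem_Eset.mp hxE
              by_cases hcc : c = cm
              · subst hcc
                refine ⟨cm, hcms, ?_, ?_⟩
                · rw [htN_cm]
                  exact Finset.mem_insert_of_mem (Finset.mem_erase.mpr ⟨hxi, hm⟩)
                · rw [hmN_cm]; exact hne
              · refine ⟨c, hc, ?_, ?_⟩
                · rw [htN_oth 0 c (by tauto)]; exact hm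
                · rw [htN_oth 0 c (by tauto)]; exact hne
        have hrest : uncrowdRest s tN =
            (uncrowdRest s t).map (fun z => if z = i + 1 then i else z) := by
          rw [uncrowdRest_def, uncrowdRest_def, hE']
          apply sort_insert_erase hi1E hiE
          intro z hz hzi1
          have hzne : z ≠ i := fun h => hiE (h ▸ hz)
          constructor
          · omega
          · omega
        obtain ⟨k, hk, hgetk⟩ := exists_idx_of_mem_E hi1E
        have hkn : k + 1 < n := by
          have := Eset_card_lt ht hn
          have := L_length (s := s) (t := t)
          omega
        have hrow_psi : (i + 1) ∈ Psi s t (k + 1) 0 :=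
          mem_psi_iff.mpr (Or.inr ⟨rfl, by omega, by omega, by simpa using hgetk.symm⟩)
        have hminus_0 : MinusCol n s (Psi s t) i 0 := by
          refine ⟨by omega, colSign_false_iff.mpr ⟨?_, ?_⟩, ?_⟩
          · exact (colHas_psi_zero ht hn hs).mpr (Or.inr hi1E)
          · intro hcon
            rcases (colHas_psi_zero ht hn hs).mp hcon with h | h
            · exact hnoi 0 (h ▸ min_mem_box ht hs)
            · exact hiE h
          · show pctr (((List.range s).drop (0 + 1)).filterMap (colSign n (Psi s t) i)) = 0
            apply pctr_after_zero
            intro j h0j hjs hcon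
            obtain ⟨hh1, _⟩ := colSign_true_iff.mp hcon
            obtain ⟨_, h2⟩ := (colHas_psi_pos ht hn (by omega)).mp hh1
            exact hnoi j (h2 ▸ min_mem_box ht hjs)
        have heb_psi : eBoxCol n (hookShape s (excess n (rowShape s) t) 0) (Psi s t) i 0 :=
          ⟨hminus_0, fun c' _ => Nat.zero_le c'⟩
        have huniq_psi : ∀ r, r < n → (i + 1) ∈ Psi s t r 0 → r = k + 1 := by
          intro r _ hmem
          exact psi_col0_row_unique ht hmem hrow_psi
        have hnl_psi : ¬ ((0:ℕ) < 0 ∧ (i + 1) ∈ Psi s t (k + 1) (0 - 1)) := by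
          rintro ⟨hcon, _⟩
          omega
        have hep := eRaw_eq_some_single (lam := hookShape s (excess n (rowShape s) t))
          (c₀ := 0) (r₀ := k + 1) heb_psi hkn hrow_psi huniq_psi hnl_psi
        have hbox_simp : insert i ((Psi s t (k + 1) 0).erase (i + 1)) = {i} := by
          rw [psi_leg (by omega) (by omega)]
          simp only [Nat.add_sub_cancel]
          rw [hgetk, Finset.erase_singleton]
          rfl
        rw [hbox_simp] at hep
        have hpsieq : Psi s tN = updateBox (Psi s t) (k + 1) 0 {i} := by
          apply psi_eq_update_leg ?_ hk hrest hgetk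
          intro c hc
          by_cases hcc : c = cm
          · subst hcc; exact hmN_cm
          · rw [htN_oth 0 c (by tauto)]
        constructor
        · rw [het, hep]
          simp
        · intro t' h
          rw [het] at h
          obtain rfl := Option.some.inj h
          rw [hep, hpsieq]
  · -- e is zero on both sides
    have htnone : eRaw n (rowShape s) i t = none := by
      apply eRaw_eq_none_iff.mpr
      intro c hc
      obtain ⟨_, h1, h2⟩ := (minusCol_row ht hn).mp hc
      exact hM ⟨c, h1, h2⟩
    have hpnone : eRaw n (hookShape s (excess n (rowShape s) t)) i (Psi s t) = none := by
      apply eRaw_eq_none_iff.mpr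
      intro c hc
      have hc' : MinusCol n s (Psi s t) i c := hc
      obtain ⟨hcs, hsign, hpctr⟩ := hc'
      obtain ⟨hhi1, hhi⟩ := colSign_false_iff.mp hsign
      rcases Nat.eq_zero_or_pos c with rfl | hc1
      · -- column 0
        rcases (colHas_psi_zero ht hn hs).mp hhi1 with h | h
        · -- i+1 = min of box 0, so i ∈ box 0, so column 0 contains i : contradiction
          have h1 : (i + 1) ∈ t 0 0 := h ▸ min_mem_box ht hs
          have h2 : i ∈ t 0 0 := by
            by_contra hcon
            exact hM ⟨0, h1, hcon⟩
          have := minE_le h2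
          omega
        · -- i+1 is an excess entry in some box c0 containing i as its min
          obtain ⟨c0, hc0, hmem, hne⟩ := mem_Eset.mp h
          have hic0 : i ∈ t 0 c0 := by
            by_contra hcon
            exact hM ⟨c0, hmem, hcon⟩
          have hinotcol0 : ¬ (i = minE (t 0 0) ∨ i ∈ Eset s t) :=
            fun hh => hhi ((colHas_psi_zero ht hn hs).mpr hh)
          have hiex : ∃ c', i ∈ t 0 c' := ⟨c0, hic0⟩
          set a := Nat.find hiex with ha_def
          have ha_mem : i ∈ t 0 a := Nat.find_spec hiex
          have ha_minimal : ∀ j, j < a → i ∉ t 0 j := fun j hj => Nat.find_min hiex hj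
          have ha_le : a ≤ c0 := Nat.find_min' hiex hic0
          have hma : minE (t 0 a) = i := by
            by_contra hh
            exact hinotcol0 (Or.inr (mem_Eset.mpr ⟨a, mem_lt_s ht ha_mem, ha_mem,
              fun hh2 => hh hh2.symm⟩))
          have ha1 : 1 ≤ a := by
            by_contra hh
            have ha0 : a = 0 := by omega
            exact hinotcol0 (Or.inl (by rw [ha0] at hma; exact hma.symm))
          have hword : pctr (((List.range s).drop (0 + 1)).filterMap
              (colSign n (Psi s t) i)) ≠ 0 := by
            apply pctr_after_ne (k := a) (by omega) (by omega)
            · intro j hj0 hja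
              apply colSign_none_of
              · intro hcon
                obtain ⟨_, h2⟩ := (colHas_psi_pos ht hn (by omega)).mp hcon
                exact ha_minimal j (by omega) (h2 ▸ min_mem_box ht (by omega))
              · intro hcon
                obtain ⟨_, h2⟩ := (colHas_psi_pos ht hn (by omega)).mp hcon
                have h3 : (i + 1) ∈ t 0 j := h2 ▸ min_mem_box ht (by omega)
                have := row_sorted ht (by omega : j < a) h3 ha_mem
                omega
            · apply colSign_true_iff.mpr
              refine ⟨(colHas_psi_pos ht hn (by omega)).mpr ⟨by omega, hma.symm⟩, ?_⟩
              intro hcon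
              obtain ⟨_, h2⟩ := (colHas_psi_pos ht hn (by omega)).mp hcon
              omega
          exact hword hpctr
      · -- column c ≥ 1
        obtain ⟨hcs', hmi1⟩ := (colHas_psi_pos ht hn hc1).mp hhi1
        have hi1c : (i + 1) ∈ t 0 c := hmi1 ▸ min_mem_box ht hcs'
        have hic : i ∈ t 0 c := by
          by_contra hcon
          exact hM ⟨c, hi1c, hcon⟩
        have := minE_le hic
        omega
    rw [htnone, hpnone]
    constructor
    · constructor <;> intro <;> rfl
    · intro t' h
      exact absurd h (by simp)

end Conj5E
theorem uncrowding_single_row (n s : ℕ) (hs : 1 ≤ s) (hn : 1 ≤ n) :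
    (∀ t, IsSVT n (rowShape s) t →
      IsSSYT n (hookShape s (excess n (rowShape s) t)) (Psi s t)) ∧
    (∀ t t', IsSVT n (rowShape s) t → IsSVT n (rowShape s) t' →
      Psi s t = Psi s t' → t = t') ∧
    (∀ e u, IsSSYT n (hookShape s e) u →
      ∃ t, IsSVT n (rowShape s) t ∧ excess n (rowShape s) t = e ∧ Psi s t = u) ∧
    (∀ t, IsSVT n (rowShape s) t →
      ∀ j, wt n (hookShape s (excess n (rowShape s) t)) (Psi s t) j =
        wt n (rowShape s) t j) ∧
    (∀ t, IsSVT n (rowShape s) t → ∀ i, 1 ≤ i → i < n →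
      (eRaw n (rowShape s) i t = none ↔
        eRaw n (hookShape s (excess n (rowShape s) t)) i (Psi s t) = none) ∧
      (∀ t', eRaw n (rowShape s) i t = some t' →
        eRaw n (hookShape s (excess n (rowShape s) t)) i (Psi s t) = some (Psi s t')) ∧
      (fRaw n (rowShape s) i t = none ↔
        fRaw n (hookShape s (excess n (rowShape s) t)) i (Psi s t) = none) ∧
      (∀ t', fRaw n (rowShape s) i t = some t' →
        fRaw n (hookShape s (excess n (rowShape s) t)) i (Psi s t) = some (Psi s t'))) := by
  refine ⟨?_, ?_, ?_, ?_, ?_⟩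
  · intro t ht
    exact psi_is_ssyt ht hn hs
  · intro t t' ht ht' h
    exact psi_injective ht ht' h
  · intro e u hu
    exact psi_surjective hu hn hs
  · intro t ht j
    exact psi_wt ht hn hs j
  · intro t ht i _ _
    obtain ⟨he1, he2⟩ := e_commute (i := i) ht hn hs
    obtain ⟨hf1, hf2⟩ := f_commute (i := i) ht hn hs
    exact ⟨he1, he2, hf1, hf2⟩

end SVTCrystal

end
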